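/- arXiv:1801.08231 — 6 statements merged into one kernel-verified Lean document; each statement's English description precedes it below -/
import Mathlib

section
/- The map ι is an order embedding: for all n-rooks σ and τ, σ ≤ τ in the Bruhat–Chevalley–Renner order on n-rooks if and only if ι(σ) ≤ ι(τ) in the Bruhat–Chevalley–Renner order on 2n-rooks. -/
open scoped Classical

/-- An `n`-rook in one-line notation: a function `a : Fin n → ℕ` (position `i`
represents position `i+1` in 1-based notation) with values in `{0,…,n}`, whose
nonzero values are pairwise distinct. `a i = 0` means position `i` is vacant. -/
def IsRook (n : ℕ) (a : Fin n → ℕ) : Prop :=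
  (∀ i, a i ≤ n) ∧ ∀ i j, a i ≠ 0 → a i = a j → i = j

/-- The rank of a rook: the number of nonzero entries. -/
def rookRank (n : ℕ) (a : Fin n → ℕ) : ℕ :=
  (Finset.univ.filter (fun i => a i ≠ 0)).card

/-- `inv(a) = #{(i,j) : i < j ∧ a i > a j}`. -/
def rookInv (n : ℕ) (a : Fin n → ℕ) : ℕ :=
  (Finset.univ.filter (fun p : Fin n × Fin n => p.1 < p.2 ∧ a p.2 < a p.1)).card

/-- `coinv(a) = #{(i,j) : i < j ∧ 0 < a i < a j}`. -/
def rookCoinv (n : ℕ) (a : Fin n → ℕ) : ℕ :=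
  (Finset.univ.filter (fun p : Fin n × Fin n => p.1 < p.2 ∧ 0 < a p.1 ∧ a p.1 < a p.2)).card

/-- The length `ℓ(a) = Σ a i + inv(a)`. -/
def rookLen (n : ℕ) (a : Fin n → ℕ) : ℕ :=
  (∑ i, a i) + rookInv n a
/-- The generating relations of the Bruhat–Chevalley–Renner order on `n`-rooks. -/
def BCRStep (n : ℕ) (a b : Fin n → ℕ) : Prop :=
  IsRook n a ∧ IsRook n b ∧
  ((∃ i, a i < b i ∧ ∀ j, j ≠ i → a j = b j) ∨
   (∃ i j : Fin n, i < j ∧ b i = a j ∧ b j = a i ∧ b j < b i ∧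
      ∀ m, m ≠ i → m ≠ j → a m = b m))

/-- The Bruhat–Chevalley–Renner order: the partial order on `n`-rooks generated by
the relations `BCRStep`. -/
def BCRle (n : ℕ) : (Fin n → ℕ) → (Fin n → ℕ) → Prop :=
  Relation.ReflTransGen (BCRStep n)

/-- The map `ι` sending an `n`-rook `σ` to the `2n`-rook which is `0` on the
first `n` positions and `σ` on the last `n` positions. -/
def iota (n : ℕ) (σ : Fin n → ℕ) : Fin (2 * n) → ℕ :=
  fun i => if h : n ≤ (i : ℕ) then σ ⟨(i : ℕ) - n, by have := i.isLt; omega⟩ else 0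

/-! ### Auxiliary: the rank (dominance) function -/

/-- `cnt n a I t = #{k < I : a k > t}`. -/
def cnt (n : ℕ) (a : Fin n → ℕ) (I t : ℕ) : ℕ :=
  (Finset.univ.filter (fun k : Fin n => (k : ℕ) < I ∧ t < a k)).card

lemma cnt_eq_sum (n : ℕ) (a : Fin n → ℕ) (I t : ℕ) :
    cnt n a I t = ∑ k : Fin n, if ((k : ℕ) < I ∧ t < a k) then 1 else 0 := by
  rw [cnt, Finset.card_filter]

lemma cnt_congr {n : ℕ} {a b : Fin n → ℕ} {I t : ℕ}
    (h : ∀ k : Fin n, (k : ℕ) < I → (t < a k ↔ t < b k)) :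
    cnt n a I t = cnt n b I t := by
  unfold cnt; congr 1
  ext k
  simp only [Finset.mem_filter, Finset.mem_univ, true_and]
  exact and_congr_right (h k)

lemma cnt_swap_eq {n : ℕ} (a : Fin n → ℕ) (i j : Fin n) (I t : ℕ)
    (hiI : (i : ℕ) < I) (hjI : (j : ℕ) < I) :
    cnt n (a ∘ Equiv.swap i j) I t = cnt n a I t := by
  rw [cnt_eq_sum, cnt_eq_sum,
    ← Equiv.sum_comp (Equiv.swap i j) (fun k => if ((k : ℕ) < I ∧ t < a k) then 1 else 0)]
  apply Finset.sum_congr rfl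
  intro k _
  rcases eq_or_ne k i with rfl | hki
  · simp [Equiv.swap_apply_left, hiI, hjI]
  rcases eq_or_ne k j with rfl | hkj
  · simp [Equiv.swap_apply_right, hiI, hjI]
  · simp [Equiv.swap_apply_of_ne_of_ne hki hkj]

lemma step_mono {n : ℕ} {a b : Fin n → ℕ} (h : BCRStep n a b) (I t : ℕ) :
    cnt n a I t ≤ cnt n b I t := by
  obtain ⟨-, -, h | h⟩ := h
  · obtain ⟨i, hi, hj⟩ := h
    apply Finset.card_le_card
    intro k hk
    simp only [Finset.mem_filter, Finset.mem_univ, true_and] at hk ⊢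
    refine ⟨hk.1, ?_⟩
    rcases eq_or_ne k i with rfl | hne
    · omega
    · rw [← hj k hne]; exact hk.2
  · obtain ⟨i, j, hij, hbi, hbj, hlt, heq⟩ := h
    have hb : b = a ∘ Equiv.swap i j := by
      funext m
      rcases eq_or_ne m i with rfl | hmi
      · simpa [Equiv.swap_apply_left] using hbi
      rcases eq_or_ne m j with rfl | hmj
      · simpa [Equiv.swap_apply_right] using hbj
      · simpa [Equiv.swap_apply_of_ne_of_ne hmi hmj] using (heq m hmi hmj).symm
    by_cases hjI : (j : ℕ) < I
    · have hiI : (i : ℕ) < I := lt_trans hij hjI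
      rw [hb, cnt_swap_eq a i j I t hiI hjI]
    · apply Finset.card_le_card
      intro k hk
      simp only [Finset.mem_filter, Finset.mem_univ, true_and] at hk ⊢
      refine ⟨hk.1, ?_⟩
      have hkj : k ≠ j := by
        intro h'; subst h'; exact hjI hk.1
      rcases eq_or_ne k i with rfl | hki
      · have : a k < a j := by omega
        rw [hbi]; omega
      · rw [← heq k hki hkj]; exact hk.2

lemma le_mono {n : ℕ} {a b : Fin n → ℕ} (h : BCRle n a b) :
    ∀ I t, cnt n a I t ≤ cnt n b I t := by
  induction h with
  | refl => exact fun I t => le_refl _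
  | tail _ h2 ih => exact fun I t => (ih I t).trans (step_mono h2 I t)

lemma cnt_succ {n : ℕ} (a : Fin n → ℕ) (i : Fin n) (t : ℕ) :
    cnt n a ((i : ℕ) + 1) t = cnt n a (i : ℕ) t + (if t < a i then 1 else 0) := by
  by_cases h : t < a i
  · rw [if_pos h]
    have hset : (Finset.univ.filter fun k : Fin n => (k : ℕ) < (i : ℕ) + 1 ∧ t < a k)
        = insert i (Finset.univ.filter fun k : Fin n => (k : ℕ) < (i : ℕ) ∧ t < a k) := by
      ext k
      simp only [Finset.mem_insert, Finset.mem_filter, Finset.mem_univ, true_and]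
      constructor
      · rintro ⟨h1, h2⟩
        rcases eq_or_ne k i with rfl | hne
        · exact Or.inl rfl
        · exact Or.inr ⟨by have := Fin.val_ne_of_ne hne; omega, h2⟩
      · rintro (rfl | ⟨h1, h2⟩)
        · exact ⟨by omega, h⟩
        · exact ⟨by omega, h2⟩
    rw [cnt, cnt, hset, Finset.card_insert_of_notMem (by simp)]
  · rw [if_neg h, add_zero]
    unfold cnt; congr 1
    ext k
    simp only [Finset.mem_filter, Finset.mem_univ, true_and]
    constructor
    · rintro ⟨h1, h2⟩
      refine ⟨?_, h2⟩
      rcases eq_or_ne k i with rfl | hne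
      · exact absurd h2 h
      · have := Fin.val_ne_of_ne hne; omega
    · rintro ⟨h1, h2⟩
      exact ⟨by omega, h2⟩

lemma cnt_ext {n : ℕ} {a b : Fin n → ℕ} (ha : IsRook n a) (hb : IsRook n b)
    (h : ∀ I t, I ≤ n → t < n → cnt n a I t = cnt n b I t) : a = b := by
  funext k
  have key : ∀ t, t < n → (t < a k ↔ t < b k) := by
    intro t ht
    have h1 := h (k : ℕ) t (le_of_lt k.isLt) ht
    have h2 := h ((k : ℕ) + 1) t k.isLt ht
    rw [cnt_succ, cnt_succ, h1] at h2
    constructor <;> intro hx <;> by_contra hy <;> simp [hx, hy] at h2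
  have hak := ha.1 k
  have hbk := hb.1 k
  by_contra hne
  rcases lt_or_gt_of_ne hne with hlt | hlt
  · exact absurd ((key (a k) (by omega)).mpr hlt) (lt_irrefl _)
  · exact absurd ((key (b k) (by omega)).mp hlt) (lt_irrefl _)

/-- The core counting inequality: if `a` agrees with `b` before `i`, the value at
`i` can rise (`a i ≤ t < b i`), and no entry of `a` strictly between positions `i`
and `I` lies in the interval `(a i, b i]`, then the dominance inequality at `(I,t)`
is strict. -/
lemma core {n : ℕ} {a b : Fin n → ℕ}
    (hdom : ∀ I t, cnt n a I t ≤ cnt n b I t) (i : Fin n)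
    (hpre : ∀ m : Fin n, (m : ℕ) < (i : ℕ) → a m = b m)
    (I t : ℕ) (hiI : (i : ℕ) < I) (h1 : a i ≤ t) (h2 : t < b i)
    (hgap : ∀ m : Fin n, (i : ℕ) < (m : ℕ) → (m : ℕ) < I → a m ≤ a i ∨ b i < a m) :
    cnt n a I t < cnt n b I t := by
  set u := b i with hu
  have key : ∀ k : Fin n,
      ((if ((k : ℕ) < I ∧ t < a k) then 1 else 0) + (if ((k : ℕ) < I ∧ u < b k) then 1 else 0))
        + (if k = i then 1 else 0)
      ≤ (if ((k : ℕ) < I ∧ t < b k) then 1 else 0) + (if ((k : ℕ) < I ∧ u < a k) then 1 else 0) := by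
    intro k
    rcases eq_or_ne k i with rfl | hne
    · simp only [if_pos rfl]
      split_ifs <;> omega
    · rw [if_neg hne]
      rcases lt_trichotomy ((k : ℕ)) ((i : ℕ)) with hki | hki | hki
      · have hk := hpre k hki
        split_ifs <;> omega
      · exact absurd (Fin.ext hki) hne
      · by_cases hkI : (k : ℕ) < I
        · have hg := hgap k hki hkI
          split_ifs <;> omega
        · split_ifs <;> omega
  have hsum := Finset.sum_le_sum (fun k (_ : k ∈ Finset.univ) => key k)
  rw [Finset.sum_add_distrib, Finset.sum_add_distrib, Finset.sum_add_distrib] at hsum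
  have hδ : (∑ k : Fin n, if k = i then 1 else 0) = 1 := by
    rw [Finset.sum_ite_eq' Finset.univ i (fun _ => 1)]
    simp
  rw [hδ, ← cnt_eq_sum, ← cnt_eq_sum, ← cnt_eq_sum, ← cnt_eq_sum] at hsum
  have hdu := hdom I u
  omega

lemma cnt_insert {n : ℕ} {a a' : Fin n → ℕ} {I t : ℕ} (i : Fin n)
    (hiI : (i : ℕ) < I) (hi : ¬ t < a i) (hi' : t < a' i)
    (hoth : ∀ k : Fin n, k ≠ i → (k : ℕ) < I → (t < a k ↔ t < a' k)) :
    cnt n a' I t = cnt n a I t + 1 := by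
  have hset : (Finset.univ.filter fun k : Fin n => (k : ℕ) < I ∧ t < a' k)
      = insert i (Finset.univ.filter fun k : Fin n => (k : ℕ) < I ∧ t < a k) := by
    ext k
    simp only [Finset.mem_insert, Finset.mem_filter, Finset.mem_univ, true_and]
    rcases eq_or_ne k i with rfl | hne
    · simp [hiI, hi', hi]
    · constructor
      · rintro ⟨hk1, hk2⟩
        exact Or.inr ⟨hk1, (hoth k hne hk1).mpr hk2⟩
      · rintro (rfl | ⟨hk1, hk2⟩)
        · exact absurd rfl hne
        · exact ⟨hk1, (hoth k hne hk1).mp hk2⟩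
  rw [cnt, cnt, hset, Finset.card_insert_of_notMem (by simp [hi])]

/-- The induction measure: the total dominance gap. -/
def gapM (n : ℕ) (a b : Fin n → ℕ) : ℕ :=
  ∑ p ∈ Finset.range (n + 1) ×ˢ Finset.range (n + 1), (cnt n b p.1 p.2 - cnt n a p.1 p.2)

lemma dom_to_le (n : ℕ) : ∀ (D : ℕ) (a b : Fin n → ℕ), IsRook n a → IsRook n b →
    (∀ I t, cnt n a I t ≤ cnt n b I t) → gapM n a b ≤ D → BCRle n a b := by
  intro D
  induction D with
  | zero =>
    intro a b ha hb hdom hM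
    have hM0 : gapM n a b = 0 := Nat.le_zero.mp hM
    have heq : a = b := by
      apply cnt_ext ha hb
      intro I t hI ht
      have hmem : (I, t) ∈ Finset.range (n + 1) ×ˢ Finset.range (n + 1) := by
        simp [Finset.mem_product, Finset.mem_range]; omega
      have h0 := (Finset.sum_eq_zero_iff.mp hM0) (I, t) hmem
      have := hdom I t
      simp only at h0
      omega
    rw [heq]
    exact Relation.ReflTransGen.refl
  | succ D ih =>
    intro a b ha hb hdom hM
    by_cases hab : a = b
    · rw [hab]
      exact Relation.ReflTransGen.refl
    -- minimal position where a and b differ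
    have hne : (Finset.univ.filter fun k : Fin n => a k ≠ b k).Nonempty := by
      obtain ⟨k, hk⟩ := Function.ne_iff.mp hab
      exact ⟨k, by simp [hk]⟩
    set i := Finset.min' _ hne with hi_def
    have hidiff : a i ≠ b i := by
      have := Finset.min'_mem _ hne
      simpa using this
    have hpre : ∀ m : Fin n, (m : ℕ) < (i : ℕ) → a m = b m := by
      intro m hm
      by_contra h
      have h2 : i ≤ m := Finset.min'_le _ m (by simp [h])
      exact absurd hm (by simpa using h2)
    have hab' : a i < b i := by
      rcases Nat.eq_zero_or_pos (a i) with h0 | h0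
      · omega
      · have hd := hdom ((i : ℕ) + 1) (a i - 1)
        rw [cnt_succ, cnt_succ] at hd
        have hpp : cnt n a (i : ℕ) (a i - 1) = cnt n b (i : ℕ) (a i - 1) :=
          cnt_congr (fun k hk => by rw [hpre k hk])
        rw [hpp] at hd
        split_ifs at hd <;> omega
    -- the set of candidate positions for a swap
    set K := Finset.univ.filter (fun k : Fin n => (i : ℕ) < (k : ℕ) ∧ a i < a k ∧ a k ≤ b i)
      with hK_def
    -- we construct a' with the four properties
    suffices hsuff : ∃ a' : Fin n → ℕ, BCRStep n a a' ∧ IsRook n a' ∧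
        (∀ I t, cnt n a' I t ≤ cnt n b I t) ∧
        cnt n a ((i : ℕ) + 1) (a i) < cnt n a' ((i : ℕ) + 1) (a i) by
      obtain ⟨a', hstep, ha', hdom', hstrict⟩ := hsuff
      have hmono := step_mono hstep
      have hMlt : gapM n a' b < gapM n a b := by
        apply Finset.sum_lt_sum
        · intro p hp
          exact Nat.sub_le_sub_left (hmono p.1 p.2) _
        · refine ⟨((i : ℕ) + 1, a i), ?_, ?_⟩
          · have := i.isLt
            have := ha.1 i
            simp [Finset.mem_product, Finset.mem_range]; omega
          · have hb1 := hdom' ((i : ℕ) + 1) (a i)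
            simp only
            omega
      exact Relation.ReflTransGen.head hstep (ih a' b ha' hb hdom' (by omega))
    by_cases hKne : K.Nonempty
    · -- Case A: swap positions i and j
      set j := Finset.min' K hKne with hj_def
      have hjK : j ∈ K := Finset.min'_mem K hKne
      rw [hK_def] at hjK
      simp only [Finset.mem_filter, Finset.mem_univ, true_and] at hjK
      obtain ⟨hij, haij, hajbi⟩ := hjK
      have hjmin : ∀ m : Fin n, (i : ℕ) < (m : ℕ) → (m : ℕ) < (j : ℕ) →
          a m ≤ a i ∨ b i < a m := by
        intro m hm1 hm2
        by_contra h
        push_neg at h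
        have hmK : m ∈ K := by
          rw [hK_def]; simp only [Finset.mem_filter, Finset.mem_univ, true_and]
          exact ⟨hm1, h.1, h.2⟩
        have := Finset.min'_le K m hmK
        rw [← hj_def] at this
        have : (j : ℕ) ≤ (m : ℕ) := this
        omega
      refine ⟨a ∘ Equiv.swap i j, ?_, ?_, ?_, ?_⟩
      case _ =>
        -- BCRStep a (a ∘ swap i j)
        refine ⟨ha, ?_, Or.inr ⟨i, j, ?_, ?_, ?_, ?_, ?_⟩⟩
        · exact ⟨fun m => ha.1 _, fun k m h0 he => (Equiv.swap i j).injective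
            (ha.2 _ _ h0 he)⟩
        · exact Fin.lt_def.mpr hij
        · simp [Equiv.swap_apply_left]
        · simp [Equiv.swap_apply_right]
        · simp [Equiv.swap_apply_left, Equiv.swap_apply_right]; omega
        · intro m hmi hmj
          simp [Equiv.swap_apply_of_ne_of_ne hmi hmj]
      case _ =>
        exact ⟨fun m => ha.1 _, fun k m h0 he => (Equiv.swap i j).injective
          (ha.2 _ _ h0 he)⟩
      case _ =>
        intro I t
        by_cases hiI : (i : ℕ) < I
        · by_cases hjI : (j : ℕ) < I
          · rw [cnt_swap_eq a i j I t hiI hjI]; exact hdom I t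
          · by_cases hmid : a i ≤ t ∧ t < a j
            · have hcnt : cnt n (a ∘ Equiv.swap i j) I t = cnt n a I t + 1 := by
                apply cnt_insert i hiI (by omega)
                · simp only [Function.comp_apply, Equiv.swap_apply_left]; exact hmid.2
                · intro k hki hkI
                  have hkj : k ≠ j := by
                    intro h'; subst h'; exact hjI hkI
                  simp [Equiv.swap_apply_of_ne_of_ne hki hkj]
              rw [hcnt]
              have := core hdom i hpre I t hiI hmid.1 (by omega)
                (fun m hm1 hm2 => hjmin m hm1 (by omega))
              omega
            · have hcnt : cnt n (a ∘ Equiv.swap i j) I t = cnt n a I t := by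
                symm
                apply cnt_congr
                intro k hkI
                have hkj : k ≠ j := by
                  intro h'; subst h'; exact hjI hkI
                rcases eq_or_ne k i with rfl | hki
                · simp only [Function.comp_apply, Equiv.swap_apply_left]
                  constructor <;> intro <;> omega
                · simp [Equiv.swap_apply_of_ne_of_ne hki hkj]
              rw [hcnt]; exact hdom I t
        · have hcnt : cnt n (a ∘ Equiv.swap i j) I t = cnt n a I t := by
            symm
            apply cnt_congr
            intro k hkI
            have hki : k ≠ i := by
              intro h'; subst h'; exact hiI hkI
            have hkj : k ≠ j := by
              intro h'; subst h'; exact hiI (by omega)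
            simp [Equiv.swap_apply_of_ne_of_ne hki hkj]
          rw [hcnt]; exact hdom I t
      case _ =>
        have hcnt : cnt n (a ∘ Equiv.swap i j) ((i : ℕ) + 1) (a i)
            = cnt n a ((i : ℕ) + 1) (a i) + 1 := by
          apply cnt_insert i (by omega) (by omega)
          · simp only [Function.comp_apply, Equiv.swap_apply_left]; exact haij
          · intro k hki hkI
            have hkj : k ≠ j := by
              intro h'; subst h'; omega
            simp [Equiv.swap_apply_of_ne_of_ne hki hkj]
        omega
    · -- Case B: raise the value at position i to b i
      have hgap : ∀ m : Fin n, (i : ℕ) < (m : ℕ) → a m ≤ a i ∨ b i < a m := by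
        intro m hm
        by_contra h
        push_neg at h
        apply hKne
        refine ⟨m, ?_⟩
        simp only [hK_def, Finset.mem_filter, Finset.mem_univ, true_and]
        exact ⟨hm, h.1, h.2⟩
      set a' := Function.update a i (b i) with ha'_def
      have ha'i : a' i = b i := Function.update_self i (b i) a
      have ha'k : ∀ k, k ≠ i → a' k = a k := fun k hk => Function.update_of_ne hk (b i) a
      have ha' : IsRook n a' := by
        constructor
        · intro m
          rcases eq_or_ne m i with rfl | hmi
          · rw [ha'i]; exact hb.1 i
          · rw [ha'k m hmi]; exact ha.1 m
        · intro k m h0 he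
          rcases eq_or_ne k i with rfl | hki <;> rcases eq_or_ne m i with rfl | hmi
          · rfl
          · exfalso
            rw [ha'i, ha'k m hmi] at he
            rcases lt_trichotomy ((m : ℕ)) ((i : ℕ)) with hmlt | hmeq | hmgt
            · rw [hpre m hmlt] at he
              have hbne : b i ≠ 0 := by rw [ha'i] at h0; exact h0
              have hv := congrArg Fin.val (hb.2 i m hbne he)
              omega
            · exact hmi (Fin.ext hmeq)
            · rcases hgap m hmgt with hle | hgt <;> omega
          · exfalso
            rw [ha'i, ha'k k hki] at he
            rw [ha'k k hki] at h0
            rcases lt_trichotomy ((k : ℕ)) ((i : ℕ)) with hklt | hkeq | hkgt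
            · rw [hpre k hklt] at he h0
              have hv := congrArg Fin.val (hb.2 k i h0 he)
              omega
            · exact hki (Fin.ext hkeq)
            · rcases hgap k hkgt with hle | hgt <;> omega
          · rw [ha'k k hki, ha'k m hmi] at he
            rw [ha'k k hki] at h0
            exact ha.2 k m h0 he
      refine ⟨a', ?_, ha', ?_, ?_⟩
      case _ =>
        refine ⟨ha, ha', Or.inl ⟨i, ?_, fun m hm => (ha'k m hm).symm⟩⟩
        rw [ha'i]; exact hab'
      case _ =>
        intro I t
        by_cases hiI : (i : ℕ) < I
        · by_cases hmid : a i ≤ t ∧ t < b i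
          · have hcnt : cnt n a' I t = cnt n a I t + 1 := by
              apply cnt_insert i hiI (by omega)
              · rw [ha'i]; exact hmid.2
              · intro k hki hkI; rw [ha'k k hki]
            rw [hcnt]
            have := core hdom i hpre I t hiI hmid.1 hmid.2
              (fun m hm1 _ => hgap m hm1)
            omega
          · have hcnt : cnt n a' I t = cnt n a I t := by
              symm
              apply cnt_congr
              intro k hkI
              rcases eq_or_ne k i with rfl | hki
              · rw [ha'i]; constructor <;> intro <;> omega
              · rw [ha'k k hki]
            rw [hcnt]; exact hdom I t
        · have hcnt : cnt n a' I t = cnt n a I t := by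
            symm
            apply cnt_congr
            intro k hkI
            have hki : k ≠ i := by
              intro h'; subst h'; exact hiI hkI
            rw [ha'k k hki]
          rw [hcnt]; exact hdom I t
      case _ =>
        have hcnt : cnt n a' ((i : ℕ) + 1) (a i) = cnt n a ((i : ℕ) + 1) (a i) + 1 := by
          apply cnt_insert i (by omega) (by omega)
          · rw [ha'i]; exact hab'
          · intro k hki hkI; rw [ha'k k hki]
        omega

/-! ### The map `iota` and `cnt` -/

lemma isRook_iota {n : ℕ} {σ : Fin n → ℕ} (h : IsRook n σ) : IsRook (2 * n) (iota n σ) := by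
  constructor
  · intro i
    unfold iota
    split
    · exact (h.1 _).trans (by omega)
    · omega
  · intro i j h0 he
    unfold iota at h0 he
    by_cases hi : n ≤ (i : ℕ)
    · by_cases hj : n ≤ (j : ℕ)
      · rw [dif_pos hi, dif_pos hj] at he
        rw [dif_pos hi] at h0
        have h2 := h.2 _ _ h0 he
        have hval : (i : ℕ) - n = (j : ℕ) - n := congrArg Fin.val h2
        apply Fin.ext; omega
      · rw [dif_pos hi, dif_neg hj] at he
        rw [dif_pos hi] at h0
        exact absurd he h0
    · rw [dif_neg hi] at h0
      exact absurd rfl h0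

lemma cnt_iota (n : ℕ) (σ : Fin n → ℕ) (I t : ℕ) :
    cnt (2 * n) (iota n σ) I t = cnt n σ (I - n) t := by
  rw [cnt_eq_sum, cnt_eq_sum]
  have h2n : n + n = 2 * n := by omega
  rw [← Equiv.sum_comp (finCongr h2n) (fun k => if ((k : ℕ) < I ∧ t < iota n σ k) then 1 else 0)]
  rw [Fin.sum_univ_add]
  have h1 : ∀ i : Fin n,
      (if (((finCongr h2n (Fin.castAdd n i) : Fin (2*n)) : ℕ) < I ∧ t < iota n σ (finCongr h2n (Fin.castAdd n i)))
        then 1 else 0) = 0 := by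
    intro i
    have hv : ((finCongr h2n (Fin.castAdd n i) : Fin (2*n)) : ℕ) = (i : ℕ) := by
      simp
    have hio : iota n σ (finCongr h2n (Fin.castAdd n i)) = 0 := by
      unfold iota
      rw [dif_neg]
      rw [hv]
      have := i.isLt
      omega
    rw [hio]
    simp
  rw [Finset.sum_congr rfl (fun i _ => h1 i), Finset.sum_const_zero, zero_add]
  apply Finset.sum_congr rfl
  intro i _
  have hv : ((finCongr h2n (Fin.natAdd n i) : Fin (2*n)) : ℕ) = n + (i : ℕ) := by
    simp
    omega
  have hio : iota n σ (finCongr h2n (Fin.natAdd n i)) = σ i := by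
    unfold iota
    rw [dif_pos (by rw [hv]; omega)]
    congr 1
    apply Fin.ext
    simp [hv]
  rw [hio, hv]
  exact if_congr (by constructor <;> intro h <;> exact ⟨by omega, h.2⟩) rfl rfl

lemma dom_iota_iff (n : ℕ) (σ τ : Fin n → ℕ) :
    (∀ I t, cnt n σ I t ≤ cnt n τ I t) ↔
    (∀ I t, cnt (2 * n) (iota n σ) I t ≤ cnt (2 * n) (iota n τ) I t) := by
  constructor
  · intro h I t
    rw [cnt_iota, cnt_iota]
    exact h _ _
  · intro h I t
    have := h (I + n) t
    rw [cnt_iota, cnt_iota, Nat.add_sub_cancel] at this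
    exact this

/-- `ι` is an order embedding for the Bruhat–Chevalley–Renner
orders: `σ ≤ τ` on `n`-rooks iff `ι(σ) ≤ ι(τ)` on `2n`-rooks. -/
theorem stmt12 (n : ℕ) (σ τ : Fin n → ℕ) (hσ : IsRook n σ) (hτ : IsRook n τ) :
    BCRle n σ τ ↔ BCRle (2 * n) (iota n σ) (iota n τ) := by
  constructor
  · intro h
    exact dom_to_le (2 * n) (gapM (2 * n) (iota n σ) (iota n τ)) _ _
      (isRook_iota hσ) (isRook_iota hτ)
      ((dom_iota_iff n σ τ).mp (le_mono h)) le_rfl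
  · intro h
    exact dom_to_le n (gapM n σ τ) σ τ hσ hτ
      ((dom_iota_iff n σ τ).mpr (le_mono h)) le_rfl
end

section
/- Let w₀ be the n-rook with w₀(i) = n+1−i for all i. Then for every 2n-rook x, x ≤ ι(w₀) in the Bruhat–Chevalley–Renner order on 2n-rooks if and only if x = ι(σ) for some n-rook σ; consequently the lower interval [0, ι(w₀)] in the poset of 2n-rooks is order-isomorphic to the poset of all n-rooks under the Bruhat–Chevalley–Renner order. -/
open scoped Classical

/-- The longest permutation `w₀`, with `w₀(i) = n+1−i` (0-based: `w₀ i = n − i`). -/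
def lastRook (n : ℕ) : Fin n → ℕ := fun i => n - i.val


namespace Aux13

variable {n : ℕ}

def res (n : ℕ) (x : Fin (2*n) → ℕ) : Fin n → ℕ :=
  fun i => x ⟨n + i.val, by have := i.isLt; omega⟩

def PHalf (n : ℕ) (x : Fin (2*n) → ℕ) : Prop :=
  (∀ i : Fin (2*n), (i:ℕ) < n → x i = 0) ∧ ∀ i, x i ≤ n

lemma iota_lo (σ : Fin n → ℕ) (i : Fin (2*n)) (h : (i:ℕ) < n) : iota n σ i = 0 := by
  unfold iota; rw [dif_neg]; omega

lemma iota_hi (σ : Fin n → ℕ) (i : Fin (2*n)) (h : n ≤ (i:ℕ)) :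
    iota n σ i = σ ⟨(i:ℕ) - n, by have := i.isLt; omega⟩ := by
  unfold iota; rw [dif_pos h]

lemma iota_hi' (σ : Fin n → ℕ) (i : Fin n) (h : n + (i:ℕ) < 2*n) :
    iota n σ ⟨n + (i:ℕ), h⟩ = σ i := by
  rw [iota_hi σ _ (by simp)]
  congr 1
  apply Fin.ext
  simp

lemma res_iota (σ : Fin n → ℕ) : res n (iota n σ) = σ := by
  funext i
  unfold res
  rw [iota_hi' σ i]

lemma iota_res {x : Fin (2*n) → ℕ} (h : ∀ i : Fin (2*n), (i:ℕ) < n → x i = 0) :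
    iota n (res n x) = x := by
  funext i
  by_cases hi : (i:ℕ) < n
  · rw [iota_lo _ _ hi, h i hi]
  · rw [iota_hi _ _ (by omega)]
    unfold res
    congr 1
    apply Fin.ext
    simp
    omega

lemma PHalf_iota {σ : Fin n → ℕ} (hσ : ∀ i, σ i ≤ n) : PHalf n (iota n σ) := by
  constructor
  · intro i hi; exact iota_lo σ i hi
  · intro i
    by_cases hi : (i:ℕ) < n
    · rw [iota_lo σ i hi]; omega
    · rw [iota_hi σ i (by omega)]; exact hσ _

def asc (n : ℕ) (a : Fin n → ℕ) : ℕ :=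
  (Finset.univ.filter (fun p : Fin n × Fin n => p.1 < p.2 ∧ a p.1 < a p.2)).card

def mu (n : ℕ) (a : Fin n → ℕ) : ℕ := asc n a + ∑ i, (n - a i)

lemma asc_eq_zero {a : Fin n → ℕ} (h : ∀ p q : Fin n, p < q → a q ≤ a p) :
    asc n a = 0 := by
  unfold asc
  rw [Finset.card_eq_zero, Finset.filter_eq_empty_iff]
  rintro p - ⟨h1, h2⟩
  exact absurd (h _ _ h1) (by omega)

/-- adjacent non-ascent implies antitone -/
lemma antitone_of_adj {f : Fin n → ℕ}
    (h : ∀ m : ℕ, (hm : m + 1 < n) → f ⟨m+1, hm⟩ ≤ f ⟨m, by omega⟩) :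
    ∀ p q : Fin n, p ≤ q → f q ≤ f p := by
  have key : ∀ d m, (hm : m + d < n) → f ⟨m + d, hm⟩ ≤ f ⟨m, by omega⟩ := by
    intro d
    induction d with
    | zero => intro m hm; exact le_of_eq (by congr 1)
    | succ d ih =>
        intro m hm
        have h1 : f ⟨m + d + 1, by omega⟩ ≤ f ⟨m + d, by omega⟩ := h (m + d) (by omega)
        have h2 := ih m (by omega)
        calc f ⟨m + (d+1), hm⟩ = f ⟨m + d + 1, by omega⟩ := rfl
        _ ≤ f ⟨m + d, by omega⟩ := h1
        _ ≤ f ⟨m, by omega⟩ := h2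
  intro p q hpq
  have hh := key ((q:ℕ) - (p:ℕ)) (p:ℕ) (by have := q.isLt; omega)
  have e1 : (⟨(p:ℕ) + ((q:ℕ) - (p:ℕ)), by have := q.isLt; omega⟩ : Fin n) = q :=
    Fin.ext (by simp; omega)
  have e2 : (⟨(p:ℕ), by omega⟩ : Fin n) = p := Fin.ext rfl
  rw [e1, e2] at hh
  exact hh

/-- swapping an adjacent ascent strictly decreases `asc` -/
lemma asc_swap_lt {a : Fin n → ℕ} {i j : Fin n} (hij : (j:ℕ) = (i:ℕ) + 1)
    (h : a i < a j) : asc n (a ∘ Equiv.swap i j) < asc n a := by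
  have hne : i ≠ j := by intro he; rw [he] at hij; omega
  set τ := Equiv.swap i j with hτ
  set Sa := Finset.univ.filter (fun p : Fin n × Fin n => p.1 < p.2 ∧ a p.1 < a p.2) with hSa
  set Sb := Finset.univ.filter
    (fun p : Fin n × Fin n => p.1 < p.2 ∧ (a ∘ τ) p.1 < (a ∘ τ) p.2) with hSb
  have hmem : (i, j) ∈ Sa := by
    rw [hSa, Finset.mem_filter]
    refine ⟨Finset.mem_univ _, ?_, h⟩
    show (i:ℕ) < (j:ℕ)
    omega
  have hkey : ∀ p ∈ Sb, (τ p.1, τ p.2) ∈ Sa.erase (i, j) := by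
    rintro ⟨p, q⟩ hpq
    rw [hSb, Finset.mem_filter] at hpq
    obtain ⟨-, hlt, hval⟩ := hpq
    simp only at hlt hval
    have hnotij : ¬(p = i ∧ q = j) := by
      rintro ⟨rfl, rfl⟩
      simp only [hτ, Function.comp, Equiv.swap_apply_left, Equiv.swap_apply_right] at hval
      omega
    have hlt' : τ p < τ q := by
      by_cases hp1 : p = i
      · subst hp1
        have hq2 : q ≠ j := fun hc => hnotij ⟨rfl, hc⟩
        have hq1 : q ≠ p := (ne_of_gt hlt)
        rw [hτ, Equiv.swap_apply_left, Equiv.swap_apply_of_ne_of_ne hq1 hq2]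
        show (j:ℕ) < (q:ℕ)
        have h1 : (p:ℕ) < (q:ℕ) := hlt
        have h2 : (q:ℕ) ≠ (j:ℕ) := fun hc => hq2 (Fin.ext hc)
        omega
      · by_cases hp2 : p = j
        · subst hp2
          have hq1 : q ≠ i := by
            intro hc; subst hc
            have h1 : (p:ℕ) < (q:ℕ) := hlt; omega
          have hq2 : q ≠ p := (ne_of_gt hlt)
          rw [hτ, Equiv.swap_apply_right, Equiv.swap_apply_of_ne_of_ne hq1 hq2]
          show (i:ℕ) < (q:ℕ)
          have h1 : (p:ℕ) < (q:ℕ) := hlt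
          omega
        · rw [hτ, Equiv.swap_apply_of_ne_of_ne hp1 hp2]
          by_cases hq1 : q = i
          · subst hq1
            rw [Equiv.swap_apply_left]
            show (p:ℕ) < (j:ℕ)
            have h1 : (p:ℕ) < (q:ℕ) := hlt
            omega
          · by_cases hq2 : q = j
            · subst hq2
              rw [Equiv.swap_apply_right]
              show (p:ℕ) < (i:ℕ)
              have h1 : (p:ℕ) < (q:ℕ) := hlt
              have h2 : (p:ℕ) ≠ (i:ℕ) := fun hc => hp1 (Fin.ext hc)
              omega
            · rw [Equiv.swap_apply_of_ne_of_ne hq1 hq2]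
              exact hlt
    rw [Finset.mem_erase, hSa, Finset.mem_filter]
    refine ⟨?_, Finset.mem_univ _, hlt', hval⟩
    intro hc
    have hc1 : τ p = i := congrArg Prod.fst hc
    have hc2 : τ q = j := congrArg Prod.snd hc
    have hp' : p = j := by
      have := congrArg τ hc1
      simpa [hτ] using this
    have hq' : q = i := by
      have := congrArg τ hc2
      simpa [hτ] using this
    subst hp'; subst hq'
    have h2 : (p:ℕ) < (q:ℕ) := hlt
    omega
  have hinj : Set.InjOn (fun p : Fin n × Fin n => (τ p.1, τ p.2)) Sb := by
    rintro ⟨p, q⟩ - ⟨p', q'⟩ - hc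
    have hc1 : τ p = τ p' := congrArg Prod.fst hc
    have hc2 : τ q = τ q' := congrArg Prod.snd hc
    exact Prod.ext (τ.injective hc1) (τ.injective hc2)
  calc asc n (a ∘ τ) = Sb.card := rfl
    _ = (Sb.image (fun p : Fin n × Fin n => (τ p.1, τ p.2))).card :=
        (Finset.card_image_of_injOn hinj).symm
    _ ≤ (Sa.erase (i, j)).card := Finset.card_le_card (by
        intro x hx
        rw [Finset.mem_image] at hx
        obtain ⟨p, hp, rfl⟩ := hx
        exact hkey p hp)
    _ < Sa.card := Finset.card_erase_lt_of_mem hmem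
    _ = asc n a := rfl

lemma sum_swap_eq (a : Fin n → ℕ) (i j : Fin n) :
    ∑ k, (n - (a ∘ Equiv.swap i j) k) = ∑ k, (n - a k) :=
  Equiv.sum_comp (Equiv.swap i j) (fun k => n - a k)

lemma isRook_comp_swap {a : Fin n → ℕ} (ha : IsRook n a) (i j : Fin n) :
    IsRook n (a ∘ Equiv.swap i j) := by
  refine ⟨fun u => ha.1 _, fun u v hu huv => ?_⟩
  have := ha.2 _ _ hu huv
  exact (Equiv.swap i j).injective this

/-- antitone rooks satisfy a i ≤ n - i -/
lemma antitone_rook_le {a : Fin n → ℕ} (ha : IsRook n a)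
    (hmono : ∀ p q : Fin n, p ≤ q → a q ≤ a p) (i : Fin n) :
    a i ≤ n - (i:ℕ) := by
  by_cases h0 : a i = 0
  · have := i.isLt; omega
  · have key : ∀ d, d ≤ (i:ℕ) → a i + d ≤ a ⟨(i:ℕ) - d, by have := i.isLt; omega⟩ := by
      intro d
      induction d with
      | zero => intro _; exact le_of_eq rfl
      | succ d ih =>
          intro hd
          have hdi := ih (by omega)
          have hle : a ⟨(i:ℕ) - d, by have := i.isLt; omega⟩ ≤
              a ⟨(i:ℕ) - (d+1), by have := i.isLt; omega⟩ := by
            apply hmono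
            show (i:ℕ) - (d+1) ≤ (i:ℕ) - d
            omega
          have hne' : a ⟨(i:ℕ) - d, by have := i.isLt; omega⟩ ≠
              a ⟨(i:ℕ) - (d+1), by have := i.isLt; omega⟩ := by
            intro hc
            have hpij := ha.2 _ _ (by omega) hc
            have hv := congrArg Fin.val hpij
            simp only [Fin.val_mk] at hv
            omega
          omega
    have h2 := key (i:ℕ) le_rfl
    have h3 : a ⟨(i:ℕ) - (i:ℕ), by have := i.isLt; omega⟩ ≤ n := ha.1 _
    omega

lemma isRook_lastRook (n : ℕ) : IsRook n (lastRook n) := by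
  constructor
  · intro i; unfold lastRook; omega
  · intro i j hne heq
    unfold lastRook at hne heq
    have hi := i.isLt
    have hj := j.isLt
    exact Fin.ext (by omega)

lemma raise_progress {a : Fin n → ℕ} (ha : IsRook n a)
    (hmono : ∀ p q : Fin n, p ≤ q → a q ≤ a p) (i : Fin n)
    (hmin : ∀ p : Fin n, p < i → a p = n - (p:ℕ))
    (hane : a i ≠ n - (i:ℕ)) :
    ∃ b, IsRook n b ∧ BCRStep n a b ∧ mu n b < mu n a := by
  have hain : a i < n - (i:ℕ) :=
    lt_of_le_of_ne (antitone_rook_le ha hmono i) hane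
  have hin : (i:ℕ) < n := i.isLt
  set b : Fin n → ℕ := fun u => if u = i then n - (i:ℕ) else a u with hbdef
  have hbi : b i = n - (i:ℕ) := by simp [hbdef]
  have hbk : ∀ u, u ≠ i → b u = a u := by intro u hu; simp [hbdef, hu]
  -- key contradiction maker: no other position can carry the value n - i
  have hval : ∀ v : Fin n, v ≠ i → a v ≠ n - (i:ℕ) := by
    intro v hvi hc
    rcases lt_trichotomy v i with hlt | heq | hgt
    · have h1 := hmin v hlt
      have h2 : (v:ℕ) < (i:ℕ) := hlt
      omega
    · exact hvi heq
    · have h1 : a v ≤ a i := hmono i v (le_of_lt hgt)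
      omega
  have hbrook : IsRook n b := by
    constructor
    · intro u
      by_cases hu : u = i
      · rw [hu, hbi]; omega
      · rw [hbk u hu]; exact ha.1 u
    · intro u v hu huv
      by_cases hui : u = i
      · by_cases hvi : v = i
        · rw [hui, hvi]
        · exfalso
          rw [hui, hbi] at huv
          rw [hbk v hvi] at huv
          exact hval v hvi huv.symm
      · by_cases hvi : v = i
        · exfalso
          rw [hvi, hbi] at huv
          rw [hbk u hui] at hu huv
          exact hval u hui huv
        · rw [hbk u hui] at hu huv
          rw [hbk v hvi] at huv
          exact ha.2 u v hu huv
  have hstep : BCRStep n a b := by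
    refine ⟨ha, hbrook, Or.inl ⟨i, ?_, ?_⟩⟩
    · rw [hbi]; exact hain
    · intro u hu; exact (hbk u hu).symm
  have hbmono : ∀ p q : Fin n, p ≤ q → b q ≤ b p := by
    intro p q hpq
    by_cases hpi : p = i
    · by_cases hqi : q = i
      · rw [hpi, hqi]
      · rw [hpi, hbi, hbk q hqi]
        have hq : i ≤ q := hpi ▸ hpq
        have := hmono i q hq
        omega
    · by_cases hqi : q = i
      · rw [hqi, hbi, hbk p hpi]
        have hpltq : p < i := lt_of_le_of_ne (hqi ▸ hpq) hpi
        have h1 := hmin p hpltq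
        have h2 : (p:ℕ) < (i:ℕ) := hpltq
        omega
      · rw [hbk p hpi, hbk q hqi]
        exact hmono p q hpq
  have hascb : asc n b = 0 := asc_eq_zero (fun p q hpq => hbmono p q (le_of_lt hpq))
  have hsum : ∑ u, (n - b u) < ∑ u, (n - a u) := by
    apply Finset.sum_lt_sum
    · intro u _
      by_cases hu : u = i
      · rw [hu, hbi]; omega
      · rw [hbk u hu]
    · exact ⟨i, Finset.mem_univ _, by rw [hbi]; omega⟩
  refine ⟨b, hbrook, hstep, ?_⟩
  unfold mu
  rw [hascb]
  omega

lemma swap_progress {a : Fin n → ℕ} (ha : IsRook n a) {m : ℕ} (hm : m + 1 < n)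
    (hlt : a ⟨m, by omega⟩ < a ⟨m+1, hm⟩) :
    ∃ b, IsRook n b ∧ BCRStep n a b ∧ mu n b < mu n a := by
  set i : Fin n := ⟨m, by omega⟩ with hidef
  set j : Fin n := ⟨m+1, hm⟩ with hjdef
  have hijv : (j:ℕ) = (i:ℕ) + 1 := rfl
  have hbrook : IsRook n (a ∘ Equiv.swap i j) := isRook_comp_swap ha i j
  have hbi : (a ∘ Equiv.swap i j) i = a j := by
    show a (Equiv.swap i j i) = a j
    rw [Equiv.swap_apply_left]
  have hbj : (a ∘ Equiv.swap i j) j = a i := by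
    show a (Equiv.swap i j j) = a i
    rw [Equiv.swap_apply_right]
  have hstep : BCRStep n a (a ∘ Equiv.swap i j) := by
    refine ⟨ha, hbrook, Or.inr ⟨i, j, ?_, hbi, hbj, ?_, ?_⟩⟩
    · show (i:ℕ) < (j:ℕ)
      omega
    · rw [hbi, hbj]; exact hlt
    · intro p hpi hpj
      show a p = a (Equiv.swap i j p)
      rw [Equiv.swap_apply_of_ne_of_ne hpi hpj]
  refine ⟨a ∘ Equiv.swap i j, hbrook, hstep, ?_⟩
  unfold mu
  have h1 := asc_swap_lt hijv hlt
  have h2 := sum_swap_eq a i j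
  omega

lemma le_lastRook (a : Fin n → ℕ) (ha : IsRook n a) : BCRle n a (lastRook n) := by
  have main : ∀ k, ∀ a, IsRook n a → mu n a < k → BCRle n a (lastRook n) := by
    intro k
    induction k with
    | zero => intro a _ h; omega
    | succ k ih =>
      intro a ha hmu
      by_cases hasc : ∃ m : ℕ, ∃ hm : m + 1 < n, a ⟨m, by omega⟩ < a ⟨m+1, hm⟩
      · obtain ⟨m, hm, hlt⟩ := hasc
        obtain ⟨b, hbrook, hstep, hmub⟩ := swap_progress ha hm hlt
        exact Relation.ReflTransGen.head hstep (ih b hbrook (by omega))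
      · push_neg at hasc
        have hmono : ∀ p q : Fin n, p ≤ q → a q ≤ a p :=
          antitone_of_adj (fun m hm => hasc m hm)
        by_cases hend : ∀ i : Fin n, a i = n - (i:ℕ)
        · have ha' : a = lastRook n := funext fun i => hend i
          rw [ha']
          exact Relation.ReflTransGen.refl
        · push_neg at hend
          have hex : ∃ m : ℕ, ∃ hm : m < n, a ⟨m, hm⟩ ≠ n - m := by
            obtain ⟨i, hi⟩ := hend
            exact ⟨(i:ℕ), i.isLt, by rw [Fin.eta]; exact hi⟩
          obtain ⟨hm0lt, hm0ne⟩ := Nat.find_spec hex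
          have hmin : ∀ p : Fin n, p < (⟨Nat.find hex, hm0lt⟩ : Fin n) → a p = n - (p:ℕ) := by
            intro p hp
            have h1 : (p:ℕ) < Nat.find hex := hp
            have h2 := Nat.find_min hex h1
            push_neg at h2
            have h3 := h2 p.isLt
            rw [Fin.eta] at h3
            exact h3
          obtain ⟨b, hbrook, hstep, hmub⟩ :=
            raise_progress ha hmono ⟨Nat.find hex, hm0lt⟩ hmin hm0ne
          exact Relation.ReflTransGen.head hstep (ih b hbrook (by omega))
  exact main (mu n a + 1) a ha (by omega)

lemma zero_le (a : Fin n → ℕ) (ha : IsRook n a) : BCRle n (fun _ => 0) a := by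
  have main : ∀ k, ∀ a, IsRook n a → rookRank n a < k → BCRle n (fun _ => 0) a := by
    intro k
    induction k with
    | zero => intro a _ h; omega
    | succ k ih =>
      intro a ha hr
      by_cases hz : ∀ i, a i = 0
      · have ha' : a = (fun _ => 0) := funext hz
        rw [ha']
        exact Relation.ReflTransGen.refl
      · push_neg at hz
        obtain ⟨i, hi⟩ := hz
        set b := fun u : Fin n => if u = i then 0 else a u with hb
        have hbk : ∀ u, u ≠ i → b u = a u := fun u hu => by simp [hb, hu]
        have hbi : b i = 0 := by simp [hb]
        have hbrook : IsRook n b := by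
          constructor
          · intro u
            by_cases hu : u = i
            · rw [hu, hbi]; omega
            · rw [hbk u hu]; exact ha.1 u
          · intro u v hu huv
            have hui : u ≠ i := by intro hc; rw [hc, hbi] at hu; exact hu rfl
            rw [hbk u hui] at hu huv
            by_cases hvi : v = i
            · rw [hvi, hbi] at huv; exact absurd huv hu
            · rw [hbk v hvi] at huv
              exact ha.2 u v hu huv
        have hstep : BCRStep n b a := by
          refine ⟨hbrook, ha, Or.inl ⟨i, ?_, ?_⟩⟩
          · rw [hbi]; omega
          · intro u hu; exact hbk u hu
        have hrank : rookRank n b < rookRank n a := by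
          unfold rookRank
          apply Finset.card_lt_card
          rw [Finset.ssubset_iff_of_subset]
          · refine ⟨i, ?_, ?_⟩
            · rw [Finset.mem_filter]; exact ⟨Finset.mem_univ _, hi⟩
            · rw [Finset.mem_filter]
              push_neg
              intro _
              rw [hbi]
          · intro u hu
            rw [Finset.mem_filter] at hu ⊢
            refine ⟨Finset.mem_univ _, ?_⟩
            intro hc
            apply hu.2
            by_cases hui : u = i
            · rw [hui, hbi]
            · rw [hbk u hui]; exact hc
        exact Relation.ReflTransGen.tail (ih b hbrook (by omega)) hstep
  exact main (rookRank n a + 1) a ha (by omega)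

lemma step_PHalf {x y : Fin (2*n) → ℕ} (h : BCRStep (2*n) x y) (hy : PHalf n y) :
    PHalf n x := by
  obtain ⟨hx, hy', hcase⟩ := h
  rcases hcase with ⟨i, hlt, heq⟩ | ⟨i, j, hij, h1, h2, h3, heq⟩
  · constructor
    · intro m hm
      by_cases hmi : m = i
      · subst hmi
        have := hy.1 m hm
        omega
      · rw [heq m hmi]; exact hy.1 m hm
    · intro m
      by_cases hmi : m = i
      · subst hmi; have := hy.2 m; omega
      · rw [heq m hmi]; exact hy.2 m
  · have hin : ¬ ((i:ℕ) < n) := by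
      intro hi
      have := hy.1 i hi
      omega
    have hjn : ¬ ((j:ℕ) < n) := by
      have : (i:ℕ) < (j:ℕ) := hij
      omega
    constructor
    · intro m hm
      have hmi : m ≠ i := by intro h; subst h; exact hin hm
      have hmj : m ≠ j := by intro h; subst h; exact hjn hm
      rw [heq m hmi hmj]; exact hy.1 m hm
    · intro m
      by_cases hmi : m = i
      · subst hmi; rw [← h2]; exact hy.2 j
      · by_cases hmj : m = j
        · subst hmj; rw [← h1]; exact hy.2 i
        · rw [heq m hmi hmj]; exact hy.2 m

lemma le_PHalf {x y : Fin (2*n) → ℕ} (h : BCRle (2*n) x y) :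
    PHalf n y → PHalf n x := by
  induction h with
  | refl => exact id
  | tail _ hbc ih => intro hc; exact ih (step_PHalf hbc hc)

lemma isRook_res {x : Fin (2*n) → ℕ} (hx : IsRook (2*n) x) (hP : PHalf n x) :
    IsRook n (res n x) := by
  constructor
  · intro i; exact hP.2 _
  · intro i j hne heq
    have := hx.2 _ _ hne heq
    have : n + (i:ℕ) = n + (j:ℕ) := congrArg Fin.val this
    exact Fin.ext (by omega)

lemma isRook_iota {σ : Fin n → ℕ} (hσ : IsRook n σ) : IsRook (2*n) (iota n σ) := by
  constructor
  · intro i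
    unfold iota
    split
    · have := hσ.1 ⟨(i:ℕ) - n, by have := i.isLt; omega⟩; omega
    · omega
  · intro i j hne heq
    unfold iota at hne heq
    by_cases hi : n ≤ (i:ℕ)
    · rw [dif_pos hi] at hne heq
      by_cases hj : n ≤ (j:ℕ)
      · rw [dif_pos hj] at heq
        have := hσ.2 _ _ hne heq
        have := congrArg Fin.val this
        simp at this
        exact Fin.ext (by omega)
      · rw [dif_neg hj] at heq; exact absurd heq hne
    · rw [dif_neg hi] at hne; exact absurd rfl hne

lemma mem_hi (i : Fin (2*n)) (h : n ≤ (i:ℕ)) :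
    i = ⟨n + ((i:ℕ) - n), by have := i.isLt; omega⟩ := Fin.ext (by simp; omega)

lemma step_iota {a b : Fin n → ℕ} (h : BCRStep n a b) :
    BCRStep (2*n) (iota n a) (iota n b) := by
  obtain ⟨ha, hb, hcase⟩ := h
  refine ⟨isRook_iota ha, isRook_iota hb, ?_⟩
  rcases hcase with ⟨i, hlt, heq⟩ | ⟨i, j, hij, h1, h2, h3, heq⟩
  · left
    refine ⟨⟨n + (i:ℕ), by have := i.isLt; omega⟩, ?_, ?_⟩
    · rw [iota_hi' a i, iota_hi' b i]; exact hlt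
    · intro m hm
      by_cases hmn : (m:ℕ) < n
      · unfold iota; rw [dif_neg (by omega), dif_neg (by omega)]
      · have hm' : m = ⟨n + ((⟨(m:ℕ) - n, by have := m.isLt; omega⟩ : Fin n) : ℕ),
            by have := m.isLt; simp; omega⟩ :=
          Fin.ext (by simp; omega)
        rw [hm', iota_hi' a _, iota_hi' b _]
        apply heq
        intro hki
        apply hm
        rw [hm']
        exact Fin.ext (by simpa using congrArg (fun t : Fin n => n + (t:ℕ)) hki)
  · right
    refine ⟨⟨n + (i:ℕ), by have := i.isLt; omega⟩, ⟨n + (j:ℕ), by have := j.isLt; omega⟩,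
      ?_, ?_, ?_, ?_, ?_⟩
    · have h' : (i:ℕ) < (j:ℕ) := hij
      show n + (i:ℕ) < n + (j:ℕ)
      omega
    · rw [iota_hi' b i, iota_hi' a j]; exact h1
    · rw [iota_hi' b j, iota_hi' a i]; exact h2
    · rw [iota_hi' b i, iota_hi' b j]; exact h3
    · intro m hmi hmj
      by_cases hmn : (m:ℕ) < n
      · unfold iota; rw [dif_neg (by omega), dif_neg (by omega)]
      · have hm' : m = ⟨n + ((⟨(m:ℕ) - n, by have := m.isLt; omega⟩ : Fin n) : ℕ),
            by have := m.isLt; simp; omega⟩ :=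
          Fin.ext (by simp; omega)
        rw [hm', iota_hi' a _, iota_hi' b _]
        apply heq
        · intro hki; apply hmi; rw [hm']
          exact Fin.ext (by simpa using congrArg (fun t : Fin n => n + (t:ℕ)) hki)
        · intro hkj; apply hmj; rw [hm']
          exact Fin.ext (by simpa using congrArg (fun t : Fin n => n + (t:ℕ)) hkj)

lemma le_iota {a b : Fin n → ℕ} (h : BCRle n a b) :
    BCRle (2*n) (iota n a) (iota n b) :=
  Relation.ReflTransGen.lift (iota n) (fun _ _ hs => step_iota hs) _ _ h

lemma res_apply (x : Fin (2*n) → ℕ) (i : Fin (2*n)) (h : n ≤ (i:ℕ)) :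
    res n x ⟨(i:ℕ) - n, by have := i.isLt; omega⟩ = x i := by
  unfold res
  congr 1
  exact Fin.ext (by simp; omega)

lemma step_res {x y : Fin (2*n) → ℕ} (h : BCRStep (2*n) x y) (hPy : PHalf n y) :
    BCRStep n (res n x) (res n y) := by
  have hPx := step_PHalf h hPy
  obtain ⟨hx, hy, hcase⟩ := h
  refine ⟨isRook_res hx hPx, isRook_res hy hPy, ?_⟩
  rcases hcase with ⟨i, hlt, heq⟩ | ⟨i, j, hij, h1, h2, h3, heq⟩
  · left
    have hin : n ≤ (i:ℕ) := by
      by_contra hc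
      have := hPy.1 i (by omega)
      omega
    refine ⟨⟨(i:ℕ) - n, by have := i.isLt; omega⟩, ?_, ?_⟩
    · rw [res_apply x i hin, res_apply y i hin]
      exact hlt
    · intro m hm
      unfold res
      apply heq
      intro hc
      apply hm
      apply Fin.ext
      have := congrArg Fin.val hc
      simp at this ⊢
      omega
  · right
    have hin : n ≤ (i:ℕ) := by
      by_contra hc
      have := hPy.1 i (by omega)
      omega
    have hjn : n ≤ (j:ℕ) := by
      have : (i:ℕ) < (j:ℕ) := hij
      omega
    refine ⟨⟨(i:ℕ) - n, by have := i.isLt; omega⟩, ⟨(j:ℕ) - n, by have := j.isLt; omega⟩,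
      ?_, ?_, ?_, ?_, ?_⟩
    · have h' : (i:ℕ) < (j:ℕ) := hij
      show (i:ℕ) - n < (j:ℕ) - n
      omega
    · rw [res_apply y i hin, res_apply x j hjn]; exact h1
    · rw [res_apply y j hjn, res_apply x i hin]; exact h2
    · rw [res_apply y j hjn, res_apply y i hin]; exact h3
    · intro m hmi hmj
      unfold res
      apply heq
      · intro hc; apply hmi; apply Fin.ext
        have := congrArg Fin.val hc; simp at this ⊢; omega
      · intro hc; apply hmj; apply Fin.ext
        have := congrArg Fin.val hc; simp at this ⊢; omega

lemma le_res {x y : Fin (2*n) → ℕ} (h : BCRle (2*n) x y) :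
    PHalf n y → BCRle n (res n x) (res n y) := by
  induction h with
  | refl => intro _; exact Relation.ReflTransGen.refl
  | tail _ hbc ih =>
      intro hPc
      have hPb := step_PHalf hbc hPc
      exact Relation.ReflTransGen.tail (ih hPb) (step_res hbc hPc)

end Aux13

/-- a `2n`-rook `x` satisfies `x ≤ ι(w₀)` iff `x = ι(σ)` for some
`n`-rook `σ`; consequently the lower interval `[0, ι(w₀)]` in the poset of
`2n`-rooks is order-isomorphic to the poset of all `n`-rooks under the
Bruhat–Chevalley–Renner order. -/
theorem stmt13 (n : ℕ) :
    (∀ x : Fin (2 * n) → ℕ, IsRook (2 * n) x →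
      (BCRle (2 * n) x (iota n (lastRook n)) ↔
        ∃ σ : Fin n → ℕ, IsRook n σ ∧ x = iota n σ)) ∧
    ∃ F : {x : Fin (2 * n) → ℕ // IsRook (2 * n) x ∧
            BCRle (2 * n) (fun _ => 0) x ∧ BCRle (2 * n) x (iota n (lastRook n))}
          ≃ {σ : Fin n → ℕ // IsRook n σ},
      ∀ a b, BCRle (2 * n) a.val b.val ↔ BCRle n (F a).val (F b).val := by
  have hPlast : Aux13.PHalf n (iota n (lastRook n)) :=
    Aux13.PHalf_iota (fun i => by unfold lastRook; omega)
  constructor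
  · intro x hx
    constructor
    · intro h
      have hPx := Aux13.le_PHalf h hPlast
      exact ⟨Aux13.res n x, Aux13.isRook_res hx hPx, (Aux13.iota_res hPx.1).symm⟩
    · rintro ⟨σ, hσ, rfl⟩
      exact Aux13.le_iota (Aux13.le_lastRook σ hσ)
  · refine ⟨⟨fun x => ⟨Aux13.res n x.val, Aux13.isRook_res x.2.1 (Aux13.le_PHalf x.2.2.2 hPlast)⟩,
      fun σ => ⟨iota n σ.val, Aux13.isRook_iota σ.2, Aux13.zero_le _ (Aux13.isRook_iota σ.2),
        Aux13.le_iota (Aux13.le_lastRook σ.val σ.2)⟩, ?_, ?_⟩, ?_⟩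
    · intro x
      apply Subtype.ext
      exact Aux13.iota_res (Aux13.le_PHalf x.2.2.2 hPlast).1
    · intro σ
      apply Subtype.ext
      exact Aux13.res_iota σ.val
    · intro a b
      constructor
      · intro h
        exact Aux13.le_res h (Aux13.le_PHalf b.2.2.2 hPlast)
      · intro h
        have h' : BCRle n (Aux13.res n a.val) (Aux13.res n b.val) := h
        have h2 := Aux13.le_iota h'
        rwa [Aux13.iota_res (Aux13.le_PHalf a.2.2.2 hPlast).1,
             Aux13.iota_res (Aux13.le_PHalf b.2.2.2 hPlast).1] at h2
end

section
/- Let id be the n-rook with id(i) = i for all i. Then for every n-rook σ, σ ≤ id in the Bruhat–Chevalley–Renner order if and only if σ is upper triangular, i.e., σ(i) ≤ i for all i. Hence the set of upper triangular n-rooks is exactly the lower interval [0, id] in the poset of n-rooks. -/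
open scoped Classical

/-- The identity rook `id(i) = i` (0-based: `id i = i + 1`). -/
def idRook (n : ℕ) : Fin n → ℕ := fun i => i.val + 1

lemma step_ut {n : ℕ} {a b : Fin n → ℕ} (h : BCRStep n a b)
    (hb : ∀ i : Fin n, b i ≤ i.val + 1) : ∀ i : Fin n, a i ≤ i.val + 1 := by
  obtain ⟨_, _, h1 | h2⟩ := h
  · obtain ⟨i, hlt, heq⟩ := h1
    intro k
    by_cases hk : k = i
    · subst hk; have := hb k; omega
    · rw [heq k hk]; exact hb k
  · obtain ⟨i, j, hij, hbi, hbj, hlt, heq⟩ := h2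
    intro k
    by_cases hki : k = i
    · subst hki
      have h1 := hb k
      omega
    · by_cases hkj : k = j
      · subst hkj
        have h1 := hb i
        have h2 : i.val < k.val := hij
        omega
      · rw [heq k hki hkj]; exact hb k

lemma rook_trunc {n : ℕ} {σ : Fin n → ℕ} (hσ : IsRook n σ) (k : ℕ) :
    IsRook n (fun i => if i.val < k then σ i else 0) := by
  constructor
  · intro i; dsimp only; split
    · exact hσ.1 i
    · omega
  · intro i j hi hij
    dsimp only at hi hij
    by_cases h1 : i.val < k
    · rw [if_pos h1] at hi hij
      by_cases h2 : j.val < k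
      · rw [if_pos h2] at hij; exact hσ.2 i j hi hij
      · rw [if_neg h2] at hij; exact absurd hij hi
    · rw [if_neg h1] at hi; exact absurd rfl hi

lemma zero_le_rook {n : ℕ} {σ : Fin n → ℕ} (hσ : IsRook n σ) :
    BCRle n (fun _ => 0) σ := by
  have key : ∀ k : ℕ, BCRle n (fun _ => 0) (fun i => if i.val < k then σ i else 0) := by
    intro k
    induction k with
    | zero =>
      have : (fun i : Fin n => if i.val < 0 then σ i else 0) = (fun _ => 0) := by
        funext i; simp
      rw [this]
      exact Relation.ReflTransGen.refl
    | succ k ih =>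
      by_cases hk : k < n
      · by_cases hz : σ ⟨k, hk⟩ = 0
        · have he : (fun i : Fin n => if i.val < k + 1 then σ i else 0)
              = (fun i => if i.val < k then σ i else 0) := by
            funext i
            by_cases h1 : i.val < k
            · rw [if_pos h1, if_pos (by omega)]
            · by_cases h2 : i.val = k
              · have : i = ⟨k, hk⟩ := Fin.ext h2
                rw [this, if_pos (by simp), if_neg (by simp), hz]
              · rw [if_neg (by omega), if_neg h1]
          rw [he]; exact ih
        · refine Relation.ReflTransGen.tail ih ?_
          refine ⟨rook_trunc hσ k, rook_trunc hσ (k+1), Or.inl ⟨⟨k, hk⟩, ?_, ?_⟩⟩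
          · simp only [Fin.val_mk]
            rw [if_neg (lt_irrefl k), if_pos (Nat.lt_succ_self k)]
            omega
          · intro j hj
            have hjk : j.val ≠ k := fun h => hj (Fin.ext h)
            dsimp only
            by_cases h1 : j.val < k
            · rw [if_pos h1, if_pos (by omega)]
            · rw [if_neg h1, if_neg (by omega)]
      · have he : (fun i : Fin n => if i.val < k + 1 then σ i else 0)
            = (fun i => if i.val < k then σ i else 0) := by
          funext i
          rw [if_pos (by omega), if_pos (by have := i.isLt; omega)]
        rw [he]; exact ih
  have hn := key n
  have he : (fun i : Fin n => if i.val < n then σ i else 0) = σ := by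
    funext i; rw [if_pos i.isLt]
  rwa [he] at hn

lemma rook_tail {n : ℕ} {σ : Fin n → ℕ} (hσ : IsRook n σ)
    (hut : ∀ i : Fin n, σ i ≤ i.val + 1) (k : ℕ) :
    IsRook n (fun i => if n - k ≤ i.val then i.val + 1 else σ i) := by
  constructor
  · intro i; dsimp only; split
    · exact i.isLt
    · exact hσ.1 i
  · intro i j hi hij
    dsimp only at hi hij
    by_cases h1 : n - k ≤ i.val <;> by_cases h2 : n - k ≤ j.val
    · rw [if_pos h1, if_pos h2] at hij; exact Fin.ext (by omega)
    · rw [if_pos h1, if_neg h2] at hij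
      exfalso; have := hut j; omega
    · rw [if_neg h1, if_pos h2] at hij
      rw [if_neg h1] at hi
      exfalso; have := hut i; omega
    · rw [if_neg h1, if_neg h2] at hij
      rw [if_neg h1] at hi
      exact hσ.2 i j hi hij

lemma ut_le_id {n : ℕ} {σ : Fin n → ℕ} (hσ : IsRook n σ)
    (hut : ∀ i : Fin n, σ i ≤ i.val + 1) : BCRle n σ (idRook n) := by
  have key : ∀ k : ℕ, BCRle n σ (fun i => if n - k ≤ i.val then i.val + 1 else σ i) := by
    intro k
    induction k with
    | zero =>
      have he : (fun i : Fin n => if n - 0 ≤ i.val then i.val + 1 else σ i) = σ := by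
        funext i; rw [if_neg (by have := i.isLt; omega)]
      rw [he]
      exact Relation.ReflTransGen.refl
    | succ k ih =>
      by_cases hk : k < n
      · set p : Fin n := ⟨n - 1 - k, by omega⟩ with hp
        by_cases hz : σ p = p.val + 1
        · have he : (fun i : Fin n => if n - (k+1) ≤ i.val then i.val + 1 else σ i)
              = (fun i => if n - k ≤ i.val then i.val + 1 else σ i) := by
            funext i
            by_cases h1 : n - k ≤ i.val
            · rw [if_pos (by omega), if_pos h1]
            · by_cases h2 : i.val = n - 1 - k
              · have : i = p := Fin.ext h2
                rw [this, if_pos (by simp [hp]; omega), if_neg (by simp [hp]; omega), hz]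
              · rw [if_neg (by omega), if_neg h1]
          rw [he]; exact ih
        · refine Relation.ReflTransGen.tail ih ?_
          refine ⟨rook_tail hσ hut k, rook_tail hσ hut (k+1), Or.inl ⟨p, ?_, ?_⟩⟩
          · have h2 : p.val = n - 1 - k := rfl
            dsimp only
            rw [if_neg (by omega), if_pos (by omega)]
            have h1 := hut p
            rw [h2] at h1 hz
            omega
          · intro j hj
            have hjk : j.val ≠ n - 1 - k := fun h => hj (Fin.ext h)
            dsimp only
            by_cases h1 : n - k ≤ j.val
            · rw [if_pos h1, if_pos (by omega)]
            · rw [if_neg h1, if_neg (by omega)]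
      · have he : (fun i : Fin n => if n - (k+1) ≤ i.val then i.val + 1 else σ i)
            = (fun i => if n - k ≤ i.val then i.val + 1 else σ i) := by
          funext i
          rw [if_pos (by omega), if_pos (by omega)]
        rw [he]; exact ih
  have hn := key n
  have he : (fun i : Fin n => if n - n ≤ i.val then i.val + 1 else σ i) = idRook n := by
    funext i; rw [if_pos (by omega)]; rfl
  rwa [he] at hn

/-- an `n`-rook `σ` satisfies `σ ≤ id` in the
Bruhat–Chevalley–Renner order iff `σ` is upper triangular (`σ(i) ≤ i` for all
`i`); hence the upper triangular `n`-rooks are exactly the lower interval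
`[0, id]`. -/
theorem stmt15 (n : ℕ) (σ : Fin n → ℕ) (hσ : IsRook n σ) :
    (BCRle n σ (idRook n) ↔ ∀ i : Fin n, σ i ≤ i.val + 1) ∧
    ((∀ i : Fin n, σ i ≤ i.val + 1) ↔
      (BCRle n (fun _ => 0) σ ∧ BCRle n σ (idRook n))) := by
  have hid : ∀ i : Fin n, idRook n i ≤ i.val + 1 := fun i => le_refl _
  have fwd : BCRle n σ (idRook n) → ∀ i : Fin n, σ i ≤ i.val + 1 := by
    intro h
    induction h using Relation.ReflTransGen.head_induction_on with
    | refl => exact hid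
    | head hstep _ ih => exact step_ut hstep (ih hstep.2.1)
  constructor
  · exact ⟨fwd, fun hut => ut_le_id hσ hut⟩
  · constructor
    · exact fun hut => ⟨zero_le_rook hσ, ut_le_id hσ hut⟩
    · exact fun ⟨_, h2⟩ => fwd h2
end

section
/- For every n ≥ 1 and every integer k with 1 ≤ k ≤ n+1, the polynomials T_{m,j}(q) satisfy the recurrence T_{n+1,k}(q) = q^k · T_{n,k}(q) + [n+1−k]_q · q^k · T_{n,k−1}(q), where [j]_q = 1 + q + ⋯ + q^{j−1} (and [0]_q = 0). -/
open scoped Classical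
/-- `(i,j)` is an arc of the set partition `P` of `{1,…,n}` (realized on `Fin n`):
`i < j`, both lie in a common block, and no element of that block is strictly
between `i` and `j`. -/
def IsArc {n : ℕ} (P : Finpartition (Finset.univ : Finset (Fin n))) (i j : Fin n) : Prop :=
  i < j ∧ ∃ b ∈ P.parts, i ∈ b ∧ j ∈ b ∧ ∀ k ∈ b, ¬(i < k ∧ k < j)

/-- The finite set of arcs of a set partition. -/
noncomputable def arcs {n : ℕ} (P : Finpartition (Finset.univ : Finset (Fin n))) :
    Finset (Fin n × Fin n) :=
  Finset.univ.filter (fun p => IsArc P p.1 p.2)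

/-- Depth of a vertex `v`: the number of arcs `(r,s)` with `r < v < s`. -/
noncomputable def depthV {n : ℕ} (P : Finpartition (Finset.univ : Finset (Fin n)))
    (v : Fin n) : ℕ :=
  ((arcs P).filter (fun p => p.1 < v ∧ v < p.2)).card

/-- Depth of an arc `α = (i,j)`: the number of arcs `(r,s)` with `r < i` and `s > j`. -/
noncomputable def depthArc {n : ℕ} (P : Finpartition (Finset.univ : Finset (Fin n)))
    (α : Fin n × Fin n) : ℕ :=
  ((arcs P).filter (fun p => p.1 < α.1 ∧ α.2 < p.2)).card

/-- Depth of a block `b` (with minimum `i` and maximum `j`): the number of arcs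
`(r,s)` with `r < i` and `s > j`; equivalently (for the nonempty blocks of a
partition) the arcs lying strictly above every vertex of `b`. -/
noncomputable def depthBlock {n : ℕ} (P : Finpartition (Finset.univ : Finset (Fin n)))
    (b : Finset (Fin n)) : ℕ :=
  ((arcs P).filter (fun p => ∀ v ∈ b, p.1 < v ∧ v < p.2)).card

/-- Two arcs `(i,j)` and `(r,s)` cross if `i < r < j < s` or `r < i < s < j`. -/
def ArcCross {n : ℕ} (α β : Fin n × Fin n) : Prop :=
  (α.1 < β.1 ∧ β.1 < α.2 ∧ α.2 < β.2) ∨ (β.1 < α.1 ∧ α.1 < β.2 ∧ β.2 < α.2)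

/-- `cross(α)`: the number of blocks of `P` containing at least one arc crossing `α`. -/
noncomputable def crossNum {n : ℕ} (P : Finpartition (Finset.univ : Finset (Fin n)))
    (α : Fin n × Fin n) : ℕ :=
  (P.parts.filter (fun b => ∃ p ∈ arcs P, p.1 ∈ b ∧ p.2 ∈ b ∧ ArcCross α p)).card

/-- The depth-index `t(A) = Σ_{i=1}^{k}(n−i) − Σ_v depth(v) + Σ_α depth(α)`,
where `k` is the number of arcs. -/
noncomputable def tIdx {n : ℕ} (P : Finpartition (Finset.univ : Finset (Fin n))) : ℤ :=
  (∑ i ∈ Finset.range (arcs P).card, ((n : ℤ) - (i + 1)))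
    - (∑ v : Fin n, (depthV P v : ℤ))
    + ∑ α ∈ arcs P, (depthArc P α : ℤ)

/-- The crossing-index `c(A) = Σ_{i=1}^{k}(n−i) − Σ_β depth(β) − Σ_α cross(α)`. -/
noncomputable def cIdx {n : ℕ} (P : Finpartition (Finset.univ : Finset (Fin n))) : ℤ :=
  (∑ i ∈ Finset.range (arcs P).card, ((n : ℤ) - (i + 1)))
    - (∑ b ∈ P.parts, (depthBlock P b : ℤ))
    - ∑ α ∈ arcs P, (crossNum P α : ℤ)

/-- The rook `φ(A)` associated to a set partition: `φ(A)(j) = i` (in 1-based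
values) whenever `(i,j)` is an arc, and `φ(A)(j) = 0` otherwise. Since at most
one arc ends at `j`, the sum below picks out that unique value. -/
noncomputable def phiRook {n : ℕ} (P : Finpartition (Finset.univ : Finset (Fin n))) :
    Fin n → ℕ :=
  fun j => ∑ i : Fin n, if IsArc P i j then i.val + 1 else 0

/-- `T_{m,j}(q) = Σ_A q^{t(A)}`, summing over all set partitions `A` of
`{1,…,m}` with exactly `j` arcs. -/
noncomputable def Tpoly (m j : ℕ) : Polynomial ℤ :=
  ∑ A ∈ (Finset.univ.filter
      (fun A : Finpartition (Finset.univ : Finset (Fin m)) => (arcs A).card = j)),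
    Polynomial.X ^ (tIdx A).toNat

namespace Stmt16

open Finset

abbrev Pt (m : ℕ) := Finpartition (Finset.univ : Finset (Fin m))

/-- Same-block relation. -/
def SB {m : ℕ} (P : Pt m) (x y : Fin m) : Prop := P.part x = P.part y

variable {m : ℕ} {P Q : Pt m}

lemma sb_refl (x : Fin m) : SB P x x := rfl
lemma sb_symm {x y : Fin m} (h : SB P x y) : SB P y x := h.symm
lemma sb_trans {x y z : Fin m} (h : SB P x y) (h' : SB P y z) : SB P x z := h.trans h'
lemma sb_comm {x y : Fin m} : SB P x y ↔ SB P y x := eq_comm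

lemma sb_iff_mem {x y : Fin m} : SB P x y ↔ y ∈ P.part x :=
  ⟨fun h => (P.mem_part_iff_part_eq_part (mem_univ y) (mem_univ x)).2 h.symm,
   fun h => ((P.mem_part_iff_part_eq_part (mem_univ y) (mem_univ x)).1 h).symm⟩

lemma sb_iff_exists {x y : Fin m} : SB P x y ↔ ∃ b ∈ P.parts, x ∈ b ∧ y ∈ b := by
  constructor
  · intro h
    exact ⟨P.part x, P.part_mem.2 (mem_univ x), P.mem_part (mem_univ x), sb_iff_mem.1 h⟩
  · rintro ⟨b, hb, hx, hy⟩
    rw [SB, P.part_eq_of_mem hb hx, P.part_eq_of_mem hb hy]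

lemma isArc_iff {i j : Fin m} :
    IsArc P i j ↔ i < j ∧ SB P i j ∧ ∀ k, SB P i k → ¬(i < k ∧ k < j) := by
  constructor
  · rintro ⟨hij, b, hb, hib, hjb, hbet⟩
    refine ⟨hij, sb_iff_exists.2 ⟨b, hb, hib, hjb⟩, fun k hk => ?_⟩
    have : k ∈ b := by
      rw [← P.part_eq_of_mem hb hib]
      exact sb_iff_mem.1 hk
    exact hbet k this
  · rintro ⟨hij, hsb, hbet⟩
    refine ⟨hij, P.part i, P.part_mem.2 (mem_univ i), P.mem_part (mem_univ i),
      sb_iff_mem.1 hsb, fun k hk => ?_⟩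
    exact hbet k (sb_iff_mem.2 hk)

lemma _root_.IsArc.sb {i j : Fin m} (h : IsArc P i j) : SB P i j := (isArc_iff.1 h).2.1
lemma _root_.IsArc.lt {i j : Fin m} (h : IsArc P i j) : i < j := (isArc_iff.1 h).1
lemma _root_.IsArc.not_between {i j : Fin m} (h : IsArc P i j) :
    ∀ k, SB P i k → ¬(i < k ∧ k < j) := (isArc_iff.1 h).2.2

lemma mem_arcs {p : Fin m × Fin m} : p ∈ arcs P ↔ IsArc P p.1 p.2 := by
  simp [arcs]

/-- Uniqueness of right endpoint given left endpoint. -/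
lemma arc_left_unique {i j j' : Fin m} (h : IsArc P i j) (h' : IsArc P i j') : j = j' := by
  rcases lt_trichotomy j j' with hlt | he | hlt
  · exact absurd ⟨h.lt, hlt⟩ (h'.not_between j h.sb)
  · exact he
  · exact absurd ⟨h'.lt, hlt⟩ (h.not_between j' h'.sb)

/-- Uniqueness of left endpoint given right endpoint. -/
lemma arc_right_unique {i i' j : Fin m} (h : IsArc P i j) (h' : IsArc P i' j) : i = i' := by
  rcases lt_trichotomy i i' with hlt | he | hlt
  · exact absurd ⟨hlt, h'.lt⟩ (h.not_between i' (sb_trans h.sb (sb_symm h'.sb)))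
  · exact he
  · exact absurd ⟨hlt, h.lt⟩ (h'.not_between i (sb_trans h'.sb (sb_symm h.sb)))

/-- Existence of an arc out of a non-maximal element. -/
lemma exists_arc_left {x y : Fin m} (hsb : SB P x y) (hxy : x < y) : ∃ j, IsArc P x j := by
  classical
  set S := (P.part x).filter (fun z => x < z) with hS
  have hne : S.Nonempty := ⟨y, by simp [hS, sb_iff_mem.1 hsb, hxy]⟩
  refine ⟨S.min' hne, isArc_iff.2 ⟨(mem_filter.1 (S.min'_mem hne)).2, ?_, ?_⟩⟩
  · exact sb_iff_mem.2 (mem_filter.1 (S.min'_mem hne)).1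
  · rintro k hk ⟨h1, h2⟩
    exact absurd (S.min'_le k (by simp [hS, sb_iff_mem.1 hk, h1])) (not_le.2 h2)

/-- Existence of an arc into a non-minimal element. -/
lemma exists_arc_right {x y : Fin m} (hsb : SB P y x) (hxy : y < x) : ∃ i, IsArc P i x := by
  classical
  set S := (P.part x).filter (fun z => z < x) with hS
  have hne : S.Nonempty := ⟨y, by simp [hS, sb_iff_mem.1 (sb_symm hsb), hxy]⟩
  set i := S.max' hne with hi
  have hiS := S.max'_mem hne
  have hisb : SB P i x := sb_symm (sb_iff_mem.2 (mem_filter.1 hiS).1)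
  refine ⟨i, isArc_iff.2 ⟨(mem_filter.1 hiS).2, hisb, ?_⟩⟩
  rintro k hk ⟨h1, h2⟩
  have hkS : k ∈ S := by
    simp only [hS, mem_filter]
    exact ⟨sb_iff_mem.1 (sb_trans (sb_symm hisb) hk), h2⟩
  exact absurd (S.le_max' k hkS) (not_le.2 h1)

/-- Partitions of `univ` are determined by their same-block relation. -/
lemma eq_of_sb (h : ∀ x y, SB P x y ↔ SB Q x y) : P = Q := by
  have hpart : ∀ x, P.part x = Q.part x := by
    intro x
    ext y
    rw [← sb_iff_mem, ← sb_iff_mem]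
    exact h x y
  ext b
  constructor
  · intro hb
    obtain ⟨x, hx⟩ := P.nonempty_of_mem_parts hb
    have : b = P.part x := (P.part_eq_of_mem hb hx).symm
    rw [this, hpart]
    exact Q.part_mem.2 (mem_univ x)
  · intro hb
    obtain ⟨x, hx⟩ := Q.nonempty_of_mem_parts hb
    have : b = Q.part x := (Q.part_eq_of_mem hb hx).symm
    rw [this, ← hpart]
    exact P.part_mem.2 (mem_univ x)

end Stmt16
namespace Stmt16

open Finset

variable {n : ℕ}

/-- Restriction of a partition of `Fin (n+1)` to `Fin n` (dropping the last element). -/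
noncomputable def res (P : Pt (n + 1)) : Pt n :=
  Finpartition.ofSetoid (Setoid.ker (fun v : Fin n => P.part v.castSucc))

/-- Extend a partition of `Fin n` to `Fin (n+1)`, attaching the new last element to the
block of `x` if `o = some x`, and as a singleton if `o = none`. -/
noncomputable def glue (A : Pt n) (o : Option (Fin n)) : Pt (n + 1) :=
  Finpartition.ofSetoid (Setoid.ker (fun i : Fin (n + 1) =>
    if h : (i : ℕ) < n then A.part ⟨i, h⟩ else o.elim ∅ A.part))

lemma sb_ofSetoid {m : ℕ} (s : Setoid (Fin m)) [DecidableRel s.r] {x y : Fin m} :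
    SB (Finpartition.ofSetoid s) x y ↔ s.r x y := by
  rw [sb_iff_mem, Finpartition.mem_part_ofSetoid_iff_rel]

lemma sb_res {P : Pt (n + 1)} {u v : Fin n} :
    SB (res P) u v ↔ SB P u.castSucc v.castSucc := by
  rw [res, sb_ofSetoid]
  exact Setoid.ker_def

lemma glue_fun_castSucc (A : Pt n) (o : Option (Fin n)) (u : Fin n) :
    (if h : ((u.castSucc : Fin (n+1)) : ℕ) < n then A.part ⟨(u.castSucc : Fin (n+1)), h⟩
      else o.elim ∅ A.part) = A.part u := by
  have h : ((u.castSucc : Fin (n+1)) : ℕ) < n := u.isLt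
  rw [dif_pos h]
  congr 1

lemma glue_fun_last (A : Pt n) (o : Option (Fin n)) :
    (if h : ((Fin.last n : Fin (n+1)) : ℕ) < n then A.part ⟨(Fin.last n : Fin (n+1)), h⟩
      else o.elim ∅ A.part) = o.elim ∅ A.part := by
  rw [dif_neg (by simp)]

lemma sb_glue_cast {A : Pt n} {o : Option (Fin n)} {u v : Fin n} :
    SB (glue A o) u.castSucc v.castSucc ↔ SB A u v := by
  rw [glue, sb_ofSetoid, Setoid.ker_def, glue_fun_castSucc, glue_fun_castSucc]
  exact Iff.rfl

lemma sb_glue_last_last {A : Pt n} {o : Option (Fin n)} :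
    SB (glue A o) (Fin.last n) (Fin.last n) := sb_refl _

lemma sb_glue_cast_last {A : Pt n} {o : Option (Fin n)} {u : Fin n} :
    SB (glue A o) u.castSucc (Fin.last n) ↔ A.part u = o.elim ∅ A.part := by
  rw [glue, sb_ofSetoid, Setoid.ker_def, glue_fun_castSucc, glue_fun_last]

lemma sb_glue_cast_last_none {A : Pt n} {u : Fin n} :
    ¬ SB (glue A none) u.castSucc (Fin.last n) := by
  rw [sb_glue_cast_last]
  intro h
  have := A.mem_part (mem_univ u)
  rw [h] at this
  simp at this

lemma sb_glue_cast_last_some {A : Pt n} {x u : Fin n} :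
    SB (glue A (some x)) u.castSucc (Fin.last n) ↔ SB A u x := by
  rw [sb_glue_cast_last]
  exact Iff.rfl

lemma res_glue (A : Pt n) (o : Option (Fin n)) : res (glue A o) = A := by
  apply eq_of_sb
  intro u v
  rw [sb_res, sb_glue_cast]

/-- The "last is a singleton" predicate. -/
def LastAlone (P : Pt (n + 1)) : Prop := ∀ u : Fin n, ¬ SB P u.castSucc (Fin.last n)

lemma glue_res_none {P : Pt (n + 1)} (h : LastAlone P) : glue (res P) none = P := by
  apply eq_of_sb
  intro x y
  induction x using Fin.lastCases with
  | last =>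
    induction y using Fin.lastCases with
    | last => simp [sb_glue_last_last, sb_refl]
    | cast v =>
      constructor
      · intro hs; exact absurd (sb_symm hs) sb_glue_cast_last_none
      · intro hs; exact absurd (sb_symm hs) (h v)
  | cast u =>
    induction y using Fin.lastCases with
    | last =>
      constructor
      · intro hs; exact absurd hs sb_glue_cast_last_none
      · intro hs; exact absurd hs (h u)
    | cast v => rw [sb_glue_cast, sb_res]

lemma glue_res_some {P : Pt (n + 1)} {x : Fin n} (h : SB P x.castSucc (Fin.last n)) :
    glue (res P) (some x) = P := by
  apply eq_of_sb
  intro a b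
  induction a using Fin.lastCases with
  | last =>
    induction b using Fin.lastCases with
    | last => simp [sb_glue_last_last, sb_refl]
    | cast v =>
      rw [sb_comm, sb_glue_cast_last_some, sb_res]
      constructor
      · intro hs; exact sb_trans (sb_symm h) (sb_symm hs)
      · intro hs; exact sb_trans (sb_symm hs) (sb_symm h)
  | cast u =>
    induction b using Fin.lastCases with
    | last =>
      rw [sb_glue_cast_last_some, sb_res]
      constructor
      · intro hs; exact sb_trans hs h
      · intro hs; exact sb_trans hs (sb_symm h)
    | cast v => rw [sb_glue_cast, sb_res]

end Stmt16
namespace Stmt16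

open Finset

variable {n : ℕ}

lemma mem_arcs' {m : ℕ} {P : Pt m} {i j : Fin m} : (i, j) ∈ arcs P ↔ IsArc P i j :=
  mem_arcs

lemma isArc_glue_cast {A : Pt n} {o : Option (Fin n)} {u v : Fin n} :
    IsArc (glue A o) u.castSucc v.castSucc ↔ IsArc A u v := by
  rw [isArc_iff, isArc_iff, Fin.castSucc_lt_castSucc_iff, sb_glue_cast]
  constructor
  · rintro ⟨h1, h2, h3⟩
    refine ⟨h1, h2, fun w hw ⟨hw1, hw2⟩ => ?_⟩
    exact h3 w.castSucc (sb_glue_cast.2 hw)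
      ⟨Fin.castSucc_lt_castSucc_iff.2 hw1, Fin.castSucc_lt_castSucc_iff.2 hw2⟩
  · rintro ⟨h1, h2, h3⟩
    refine ⟨h1, h2, fun k hk ⟨hk1, hk2⟩ => ?_⟩
    have hkl : k < Fin.last n := lt_trans hk2 (Fin.castSucc_lt_last v)
    induction k using Fin.lastCases with
    | last => exact absurd hkl (lt_irrefl _)
    | cast w =>
      exact h3 w (sb_glue_cast.1 hk)
        ⟨Fin.castSucc_lt_castSucc_iff.1 hk1, Fin.castSucc_lt_castSucc_iff.1 hk2⟩

/-- `x` is the maximum of its block. -/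
def IsMx (A : Pt n) (x : Fin n) : Prop := ∀ y, SB A x y → y ≤ x

lemma isArc_glue_cast_last_some {A : Pt n} {x : Fin n} (hx : IsMx A x) {u : Fin n} :
    IsArc (glue A (some x)) u.castSucc (Fin.last n) ↔ u = x := by
  constructor
  · intro h
    have hsb : SB A u x := sb_glue_cast_last_some.1 h.sb
    rcases lt_trichotomy u x with hlt | he | hlt
    · exact absurd ⟨Fin.castSucc_lt_castSucc_iff.2 hlt, Fin.castSucc_lt_last x⟩
        (h.not_between x.castSucc (sb_glue_cast.2 hsb))
    · exact he
    · exact absurd (hx u (sb_symm hsb)) (not_le.2 hlt)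
  · rintro rfl
    refine isArc_iff.2 ⟨Fin.castSucc_lt_last u, sb_glue_cast_last_some.2 (sb_refl _), ?_⟩
    rintro k hk ⟨hk1, hk2⟩
    induction k using Fin.lastCases with
    | last => exact absurd hk2 (lt_irrefl _)
    | cast w =>
      have : w ≤ u := hx w (sb_glue_cast.1 hk)
      exact absurd (Fin.castSucc_lt_castSucc_iff.1 hk1) (not_lt.2 this)

lemma not_isArc_glue_cast_last_none {A : Pt n} {u : Fin n} :
    ¬ IsArc (glue A none) u.castSucc (Fin.last n) := fun h =>
  sb_glue_cast_last_none h.sb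

lemma not_isArc_last_left {m : ℕ} {P : Pt (m+1)} {j : Fin (m+1)} :
    ¬ IsArc P (Fin.last m) j := fun h => absurd h.lt (not_lt.2 (Fin.le_last j))

/-- The embedding of pairs. -/
def up (p : Fin n × Fin n) : Fin (n+1) × Fin (n+1) := (p.1.castSucc, p.2.castSucc)

lemma up_injective : Function.Injective (up (n := n)) := by
  rintro ⟨a, b⟩ ⟨c, d⟩ h
  simp only [up, Prod.mk.injEq, Fin.castSucc_inj] at h
  simp [Prod.ext_iff, h.1, h.2]

lemma arcs_glue_none (A : Pt n) :
    arcs (glue A none) = (arcs A).image up := by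
  ext ⟨i, j⟩
  simp only [mem_arcs, mem_image]
  constructor
  · intro h
    induction j using Fin.lastCases with
    | last =>
      induction i using Fin.lastCases with
      | last => exact absurd h not_isArc_last_left
      | cast u => exact absurd h not_isArc_glue_cast_last_none
    | cast v =>
      induction i using Fin.lastCases with
      | last => exact absurd h not_isArc_last_left
      | cast u => exact ⟨(u, v), isArc_glue_cast.1 h, rfl⟩
  · rintro ⟨⟨u, v⟩, hm, heq⟩
    have : i = u.castSucc ∧ j = v.castSucc := by
      rw [Prod.ext_iff] at heq; exact ⟨heq.1.symm, heq.2.symm⟩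
    rw [this.1, this.2]
    exact isArc_glue_cast.2 hm

lemma arcs_glue_some {A : Pt n} {x : Fin n} (hx : IsMx A x) :
    arcs (glue A (some x)) = insert (x.castSucc, Fin.last n) ((arcs A).image up) := by
  ext ⟨i, j⟩
  simp only [mem_arcs, mem_insert, mem_image]
  constructor
  · intro h
    induction j using Fin.lastCases with
    | last =>
      induction i using Fin.lastCases with
      | last => exact absurd h not_isArc_last_left
      | cast u =>
        left
        have := (isArc_glue_cast_last_some hx).1 h
        rw [this]
    | cast v =>
      induction i using Fin.lastCases with
      | last => exact absurd h not_isArc_last_left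
      | cast u => exact Or.inr ⟨(u, v), isArc_glue_cast.1 h, rfl⟩
  · rintro (heq | ⟨⟨u, v⟩, hm, heq⟩)
    · rw [Prod.ext_iff] at heq
      simp only at heq
      rw [heq.1, heq.2]
      exact (isArc_glue_cast_last_some hx).2 rfl
    · rw [Prod.ext_iff] at heq
      simp only [up] at heq
      rw [← heq.1, ← heq.2]
      exact isArc_glue_cast.2 hm

lemma last_not_mem_up_image {A : Pt n} {x : Fin n} :
    (x.castSucc, Fin.last n) ∉ (arcs A).image up := by
  simp only [mem_image, not_exists]
  rintro ⟨u, v⟩ ⟨hm, heq⟩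
  rw [Prod.ext_iff] at heq
  simp only [up] at heq
  exact absurd heq.2 (Fin.ne_last_of_lt (Fin.castSucc_lt_last v))

lemma card_arcs_glue_none (A : Pt n) : (arcs (glue A none)).card = (arcs A).card := by
  rw [arcs_glue_none, card_image_of_injective _ up_injective]

lemma card_arcs_glue_some {A : Pt n} {x : Fin n} (hx : IsMx A x) :
    (arcs (glue A (some x))).card = (arcs A).card + 1 := by
  rw [arcs_glue_some hx, card_insert_of_notMem last_not_mem_up_image,
    card_image_of_injective _ up_injective]

/-- The finset of block maxima. -/
noncomputable def MxF (A : Pt n) : Finset (Fin n) := univ.filter (fun x => IsMx A x)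

lemma mem_MxF {A : Pt n} {x : Fin n} : x ∈ MxF A ↔ IsMx A x := by simp [MxF]

/-- The set of left endpoints of arcs. -/
noncomputable def Lset (A : Pt n) : Finset (Fin n) := (arcs A).image Prod.fst

lemma lset_union_mxF (A : Pt n) : Lset A ∪ MxF A = univ := by
  ext x
  simp only [mem_union, mem_univ, iff_true]
  by_cases h : IsMx A x
  · exact Or.inr (mem_MxF.2 h)
  · left
    simp only [IsMx, not_forall] at h
    obtain ⟨y, hy, hy2⟩ := h
    obtain ⟨j, hj⟩ := exists_arc_left hy (not_le.1 hy2)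
    exact mem_image.2 ⟨(x, j), mem_arcs.2 hj, rfl⟩

lemma lset_disjoint_mxF (A : Pt n) : Disjoint (Lset A) (MxF A) := by
  rw [disjoint_left]
  intro x hx hmx
  obtain ⟨⟨i, j⟩, hm, heq⟩ := mem_image.1 hx
  have harc := mem_arcs.1 hm
  simp only at heq
  subst heq
  exact absurd (mem_MxF.1 hmx j harc.sb) (not_le.2 harc.lt)

lemma card_filter_lset (A : Pt n) (w : Fin n) :
    ((Lset A).filter (fun z => z ≤ w)).card = ((arcs A).filter (fun p => p.1 ≤ w)).card := by
  rw [Lset, Finset.filter_image]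
  exact card_image_of_injOn (fun p hp q hq hpq => by
    have hp' := mem_arcs.1 (mem_filter.1 hp).1
    have hq' := mem_arcs.1 (mem_filter.1 hq).1
    have h2 : p.2 = q.2 := arc_left_unique (hpq ▸ hp') hq'
    exact Prod.ext hpq h2)

lemma card_lset (A : Pt n) : (Lset A).card = (arcs A).card := by
  apply card_image_of_injOn
  intro p hp q hq hpq
  have hp' := mem_arcs.1 hp
  have hq' := mem_arcs.1 hq
  exact Prod.ext hpq (arc_left_unique (hpq ▸ hp') hq')

/-- Global count: `n = #arcs + #maxima`. -/
lemma card_arcs_add_card_mxF (A : Pt n) : (arcs A).card + (MxF A).card = n := by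
  have h := congrArg Finset.card (lset_union_mxF A)
  rw [card_union_of_disjoint (lset_disjoint_mxF A), card_lset, card_univ, Fintype.card_fin] at h
  exact h

/-- Local count below `w`. -/
lemma count_below (A : Pt n) (w : Fin n) :
    (w : ℕ) + 1 = ((arcs A).filter (fun p => p.1 ≤ w)).card
      + ((MxF A).filter (fun z => z ≤ w)).card := by
  have h1 : (univ.filter (fun z : Fin n => z ≤ w)) = Finset.Iic w := by
    ext z; simp
  have h2 : (Lset A ∪ MxF A).filter (fun z => z ≤ w)
      = (Lset A).filter (fun z => z ≤ w) ∪ (MxF A).filter (fun z => z ≤ w) :=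
    filter_union _ _ _
  rw [lset_union_mxF, h1] at h2
  have h3 := congrArg Finset.card h2
  rw [Fin.card_Iic] at h3
  rw [h3, card_union_of_disjoint (disjoint_filter_filter (lset_disjoint_mxF A)),
    card_filter_lset]

/-- The rank of a maximum. -/
noncomputable def rk (A : Pt n) (x : Fin n) : ℕ := ((MxF A).filter (fun z => z ≤ x)).card

/-- Key rank identity: `x + 1 + #{arcs strictly right of x} = #arcs + rk x`. -/
lemma rank_identity (A : Pt n) (x : Fin n) :
    (x : ℕ) + 1 + ((arcs A).filter (fun p => x < p.1)).card
      = (arcs A).card + rk A x := by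
  have hsplit : ((arcs A).filter (fun p => p.1 ≤ x)).card
      + ((arcs A).filter (fun p => x < p.1)).card = (arcs A).card := by
    have h0 := Finset.card_filter_add_card_filter_not (s := arcs A)
      (p := fun p => (p.1 ≤ x))
    have h1 : (arcs A).filter (fun p => ¬ p.1 ≤ x) = (arcs A).filter (fun p => x < p.1) := by
      apply filter_congr
      intro p _
      simp [not_le]
    rw [h1] at h0
    exact h0
  have h := count_below A x
  rw [rk]
  omega

end Stmt16
namespace Stmt16

open Finset

variable {n : ℕ}

lemma depthV_glue_last (A : Pt n) (o : Option (Fin n)) :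
    depthV (glue A o) (Fin.last n) = 0 := by
  rw [depthV, card_eq_zero, filter_eq_empty_iff]
  rintro p _ ⟨_, h2⟩
  exact absurd h2 (not_lt.2 (Fin.le_last p.2))

lemma up_fst (p : Fin n × Fin n) : (up p).1 = p.1.castSucc := rfl
lemma up_snd (p : Fin n × Fin n) : (up p).2 = p.2.castSucc := rfl

lemma card_filter_up_image (A : Pt n) {c : Fin (n+1) × Fin (n+1) → Prop}
    {c' : Fin n × Fin n → Prop} [DecidablePred c] [DecidablePred c']
    (h : ∀ p ∈ arcs A, c (up p) ↔ c' p) :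
    (((arcs A).image up).filter c).card = ((arcs A).filter c').card := by
  rw [Finset.filter_image, card_image_of_injective _ up_injective]
  congr 1
  exact filter_congr h

lemma depthV_glue_cast_none (A : Pt n) (v : Fin n) :
    depthV (glue A none) v.castSucc = depthV A v := by
  rw [depthV, depthV, arcs_glue_none]
  exact card_filter_up_image A (fun p _ => by
    simp [up, Fin.castSucc_lt_castSucc_iff])

lemma depthV_glue_cast_some {A : Pt n} {x : Fin n} (hx : IsMx A x) (v : Fin n) :
    depthV (glue A (some x)) v.castSucc = depthV A v + (if x < v then 1 else 0) := by
  rw [depthV, depthV, arcs_glue_some hx, filter_insert]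
  have himg : (((arcs A).image up).filter
      (fun p => p.1 < v.castSucc ∧ v.castSucc < p.2)).card
      = ((arcs A).filter (fun p => p.1 < v ∧ v < p.2)).card :=
    card_filter_up_image A (fun p _ => by simp [up, Fin.castSucc_lt_castSucc_iff])
  by_cases hc : ((x.castSucc : Fin (n+1)), Fin.last n).1 < v.castSucc
      ∧ v.castSucc < ((x.castSucc : Fin (n+1)), Fin.last n).2
  · rw [if_pos hc, card_insert_of_notMem (fun hmem => last_not_mem_up_image
      (mem_filter.1 hmem).1), himg, if_pos]
    · exact Fin.castSucc_lt_castSucc_iff.1 hc.1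
  · rw [if_neg hc, himg, if_neg, add_zero]
    intro hxv
    exact hc ⟨Fin.castSucc_lt_castSucc_iff.2 hxv, Fin.castSucc_lt_last v⟩

lemma sum_ite_lt (x : Fin n) :
    (∑ v : Fin n, (if x < v then (1 : ℤ) else 0)) = ((Finset.Ioi x).card : ℤ) := by
  rw [Finset.sum_boole]
  have h : univ.filter (fun v : Fin n => x < v) = Finset.Ioi x := by
    ext v
    simp [Finset.mem_Ioi]
  rw [h]

lemma card_Ioi_add (x : Fin n) : (Finset.Ioi x).card + (x : ℕ) + 1 = n := by
  rw [Fin.card_Ioi]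
  have := x.isLt
  omega

lemma sum_depthV_glue_none (A : Pt n) :
    (∑ v : Fin (n+1), (depthV (glue A none) v : ℤ))
      = ∑ v : Fin n, (depthV A v : ℤ) := by
  rw [Fin.sum_univ_castSucc, depthV_glue_last, Nat.cast_zero, add_zero]
  exact Finset.sum_congr rfl (fun v _ => by rw [depthV_glue_cast_none])

lemma sum_depthV_glue_some {A : Pt n} {x : Fin n} (hx : IsMx A x) :
    (∑ v : Fin (n+1), (depthV (glue A (some x)) v : ℤ))
      = (∑ v : Fin n, (depthV A v : ℤ)) + ((Finset.Ioi x).card : ℤ) := by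
  rw [Fin.sum_univ_castSucc, depthV_glue_last, Nat.cast_zero, add_zero]
  have : ∀ v : Fin n, ((depthV (glue A (some x)) v.castSucc : ℤ))
      = (depthV A v : ℤ) + (if x < v then (1:ℤ) else 0) := by
    intro v
    rw [depthV_glue_cast_some hx]
    push_cast
    split <;> simp
  rw [Finset.sum_congr rfl (fun v _ => this v), Finset.sum_add_distrib, sum_ite_lt]

lemma depthArc_glue_up_none (A : Pt n) (α : Fin n × Fin n) :
    depthArc (glue A none) (up α) = depthArc A α := by
  rw [depthArc, depthArc, arcs_glue_none]
  exact card_filter_up_image A (fun p _ => by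
    simp [up, Fin.castSucc_lt_castSucc_iff])

lemma depthArc_glue_up_some {A : Pt n} {x : Fin n} (hx : IsMx A x) (α : Fin n × Fin n) :
    depthArc (glue A (some x)) (up α)
      = depthArc A α + (if x < α.1 then 1 else 0) := by
  rw [depthArc, depthArc, arcs_glue_some hx, filter_insert]
  have himg : (((arcs A).image up).filter
      (fun p => p.1 < (up α).1 ∧ (up α).2 < p.2)).card
      = ((arcs A).filter (fun p => p.1 < α.1 ∧ α.2 < p.2)).card :=
    card_filter_up_image A (fun p _ => by simp [up, Fin.castSucc_lt_castSucc_iff])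
  by_cases hc : ((x.castSucc : Fin (n+1)), Fin.last n).1 < (up α).1
      ∧ (up α).2 < ((x.castSucc : Fin (n+1)), Fin.last n).2
  · rw [if_pos hc, card_insert_of_notMem (fun hmem => last_not_mem_up_image
      (mem_filter.1 hmem).1), himg, if_pos]
    · exact Fin.castSucc_lt_castSucc_iff.1 hc.1
  · rw [if_neg hc, himg, if_neg, add_zero]
    intro hxv
    exact hc ⟨Fin.castSucc_lt_castSucc_iff.2 hxv, Fin.castSucc_lt_last α.2⟩

lemma depthArc_glue_beta {A : Pt n} {x : Fin n} (o : Option (Fin n)) :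
    depthArc (glue A o) (x.castSucc, Fin.last n) = 0 := by
  rw [depthArc, card_eq_zero, filter_eq_empty_iff]
  rintro p _ ⟨_, h2⟩
  exact absurd h2 (not_lt.2 (Fin.le_last p.2))

lemma sum_depthArc_glue_none (A : Pt n) :
    (∑ α ∈ arcs (glue A none), (depthArc (glue A none) α : ℤ))
      = ∑ α ∈ arcs A, (depthArc A α : ℤ) := by
  rw [arcs_glue_none, Finset.sum_image (fun p _ q _ h => up_injective h)]
  exact Finset.sum_congr rfl (fun α _ => by rw [depthArc_glue_up_none])

lemma sum_depthArc_glue_some {A : Pt n} {x : Fin n} (hx : IsMx A x) :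
    (∑ α ∈ arcs (glue A (some x)), (depthArc (glue A (some x)) α : ℤ))
      = (∑ α ∈ arcs A, (depthArc A α : ℤ))
        + (((arcs A).filter (fun p => x < p.1)).card : ℤ) := by
  rw [arcs_glue_some hx, Finset.sum_insert last_not_mem_up_image,
    Finset.sum_image (fun p _ q _ h => up_injective h), depthArc_glue_beta,
    Nat.cast_zero, zero_add]
  have : ∀ α : Fin n × Fin n, ((depthArc (glue A (some x)) (up α) : ℤ))
      = (depthArc A α : ℤ) + (if x < α.1 then (1:ℤ) else 0) := by
    intro α
    rw [depthArc_glue_up_some hx]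
    push_cast
    split <;> simp
  rw [Finset.sum_congr rfl (fun α _ => this α), Finset.sum_add_distrib, Finset.sum_boole]

lemma firstsum_succ (c : ℕ) :
    (∑ i ∈ Finset.range c, ((((n+1 : ℕ)) : ℤ) - (i + 1)))
      = (∑ i ∈ Finset.range c, ((n : ℤ) - (i + 1))) + c := by
  induction c with
  | zero => simp
  | succ c ih =>
    rw [Finset.sum_range_succ, Finset.sum_range_succ, ih]
    push_cast
    ring

lemma tIdx_glue_none (A : Pt n) : tIdx (glue A none) = tIdx A + (arcs A).card := by
  rw [tIdx, tIdx, card_arcs_glue_none, sum_depthV_glue_none, sum_depthArc_glue_none,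
    firstsum_succ]
  ring

lemma tIdx_glue_some {A : Pt n} {x : Fin n} (hx : IsMx A x) :
    tIdx (glue A (some x)) = tIdx A + (arcs A).card + rk A x := by
  rw [tIdx, tIdx, card_arcs_glue_some hx, sum_depthV_glue_some hx, sum_depthArc_glue_some hx]
  rw [Finset.sum_range_succ, firstsum_succ]
  have h2 := rank_identity A x
  have h1 := card_Ioi_add x
  have hx1 : ((x : ℕ) : ℤ) + 1 + ((((arcs A).filter (fun p => x < p.1)).card : ℕ) : ℤ)
      = (((arcs A).card : ℕ) : ℤ) + ((rk A x : ℕ) : ℤ) := by exact_mod_cast h2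
  have hI : ((Finset.Ioi x).card : ℤ) + ((x : ℕ) : ℤ) + 1 = (n : ℤ) := by exact_mod_cast h1
  push_cast at hx1 hI ⊢
  linarith

lemma tIdx_zero (P : Pt 0) : tIdx P = 0 := by
  have h : arcs P = ∅ := by
    rw [eq_empty_iff_forall_notMem]
    intro p _
    exact p.1.elim0
  simp [tIdx, h]

lemma exists_partner {P : Pt (n+1)} (h : ¬ LastAlone P) :
    ∃ x, IsMx (res P) x ∧ IsArc P x.castSucc (Fin.last n)
      ∧ glue (res P) (some x) = P := by
  rw [LastAlone, not_forall] at h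
  obtain ⟨u, hu⟩ := h
  rw [not_not] at hu
  obtain ⟨i, hi⟩ := exists_arc_right hu (Fin.castSucc_lt_last u)
  have hilt : i < Fin.last n := hi.lt
  induction i using Fin.lastCases with
  | last => exact absurd hilt (lt_irrefl _)
  | cast x =>
    refine ⟨x, ?_, hi, glue_res_some hi.sb⟩
    intro w hw
    by_contra hwx
    rw [not_le] at hwx
    exact hi.not_between w.castSucc (sb_res.1 hw)
      ⟨Fin.castSucc_lt_castSucc_iff.2 hwx, Fin.castSucc_lt_last w⟩

lemma tIdx_nonneg : ∀ {m : ℕ} (P : Pt m), 0 ≤ tIdx P := by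
  intro m
  induction m with
  | zero => intro P; rw [tIdx_zero]
  | succ n ih =>
    intro P
    by_cases h : LastAlone P
    · rw [← glue_res_none h, tIdx_glue_none]
      have := ih (res P)
      positivity
    · obtain ⟨x, hx, _, hglue⟩ := exists_partner h
      rw [← hglue, tIdx_glue_some hx]
      have := ih (res P)
      positivity

end Stmt16
namespace Stmt16

open Finset

lemma sum_rank_aux {α : Type*} [LinearOrder α] (f : ℕ → Polynomial ℤ) :
    ∀ (c : ℕ) (s : Finset α), s.card = c →
      ∑ x ∈ s, f ((s.filter (fun z => z ≤ x)).card) = ∑ i ∈ Finset.range c, f (i + 1) := by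
  intro c
  induction c with
  | zero =>
    intro s hs
    rw [Finset.card_eq_zero.1 hs]
    simp
  | succ c ih =>
    intro s hs
    have hne : s.Nonempty := Finset.card_pos.1 (by omega)
    set M := s.max' hne with hM
    have hMs : M ∈ s := s.max'_mem hne
    have h1 : s.filter (fun z => z ≤ M) = s :=
      Finset.filter_true_of_mem (fun z hz => Finset.le_max' s z hz)
    have h2 : ∀ y ∈ s.erase M,
        s.filter (fun z => z ≤ y) = (s.erase M).filter (fun z => z ≤ y) := by
      intro y hy
      ext z
      simp only [Finset.mem_filter, Finset.mem_erase]
      constructor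
      · rintro ⟨hzs, hzy⟩
        refine ⟨⟨?_, hzs⟩, hzy⟩
        rintro rfl
        have hyM : y ≤ M := Finset.le_max' s y (Finset.mem_of_mem_erase hy)
        exact (Finset.ne_of_mem_erase hy) (le_antisymm hyM hzy)
      · rintro ⟨⟨_, hzs⟩, hzy⟩
        exact ⟨hzs, hzy⟩
    rw [← Finset.add_sum_erase s _ hMs, h1, hs,
      Finset.sum_congr rfl (fun y hy => by rw [h2 y hy]),
      ih (s.erase M) (by rw [Finset.card_erase_of_mem hMs, hs]; rfl),
      Finset.sum_range_succ]
    exact add_comm _ _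

variable {n : ℕ}

lemma not_lastAlone_glue_some {A : Pt n} {x : Fin n} :
    ¬ LastAlone (glue A (some x)) := fun hLA =>
  hLA x (sb_glue_cast_last_some.2 (sb_refl x))

lemma partner_spec_eq {P : Pt (n+1)} (h : ¬ LastAlone P) {A : Pt n} {x : Fin n}
    (hmx : IsMx A x) (hP : glue A (some x) = P) :
    res P = A ∧ (exists_partner h).choose = x := by
  have h1 : res P = A := by rw [← hP, res_glue]
  obtain ⟨_, harc', _⟩ := (exists_partner h).choose_spec
  have harc : IsArc (glue A (some x)) (exists_partner h).choose.castSucc (Fin.last n) := by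
    rw [hP]
    exact harc'
  exact ⟨h1, (isArc_glue_cast_last_some hmx).1 harc⟩

set_option maxHeartbeats 1000000 in
theorem stmt16' (n k : ℕ) (hk1 : 1 ≤ k) (hk2 : k ≤ n + 1) :
    Tpoly (n + 1) k
      = Polynomial.X ^ k * Tpoly n k
        + (∑ i ∈ Finset.range (n + 1 - k), (Polynomial.X : Polynomial ℤ) ^ i)
            * Polynomial.X ^ k * Tpoly n (k - 1) := by
  classical
  set F : Finset (Pt (n+1)) :=
    Finset.univ.filter (fun P : Pt (n+1) => (arcs P).card = k) with hF
  set G : Finset (Pt n) :=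
    Finset.univ.filter (fun A : Pt n => (arcs A).card = k) with hG
  set G' : Finset (Pt n) :=
    Finset.univ.filter (fun A : Pt n => (arcs A).card = k - 1) with hG'
  -- Sum 1 : partitions with last element alone
  have hsum1 : ∑ P ∈ F.filter (fun P => LastAlone P), Polynomial.X ^ (tIdx P).toNat
      = ∑ A ∈ G, (Polynomial.X : Polynomial ℤ) ^ (k + (tIdx A).toNat) := by
    refine Finset.sum_bij' (fun P _ => res P) (fun A _ => glue A none) ?_ ?_ ?_ ?_ ?_
    · intro P hP
      obtain ⟨hPF, hLA⟩ := Finset.mem_filter.1 hP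
      have hcard : (arcs P).card = k := (Finset.mem_filter.1 hPF).2
      refine Finset.mem_filter.2 ⟨Finset.mem_univ _, ?_⟩
      rw [← card_arcs_glue_none (res P), glue_res_none hLA, hcard]
    · intro A hA
      have hcard : (arcs A).card = k := (Finset.mem_filter.1 hA).2
      refine Finset.mem_filter.2 ⟨Finset.mem_filter.2 ⟨Finset.mem_univ _, ?_⟩, ?_⟩
      · rw [card_arcs_glue_none, hcard]
      · intro u
        exact sb_glue_cast_last_none
    · intro P hP
      exact glue_res_none (Finset.mem_filter.1 hP).2
    · intro A _
      exact res_glue A none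
    · intro P hP
      obtain ⟨hPF, hLA⟩ := Finset.mem_filter.1 hP
      have hcard : (arcs P).card = k := (Finset.mem_filter.1 hPF).2
      have heq : tIdx P = tIdx (res P) + (arcs (res P)).card := by
        conv_lhs => rw [← glue_res_none hLA]
        exact tIdx_glue_none (res P)
      have hcard' : (arcs (res P)).card = k := by
        rw [← card_arcs_glue_none (res P), glue_res_none hLA, hcard]
      have hnn := tIdx_nonneg (res P)
      show (Polynomial.X : Polynomial ℤ) ^ (tIdx P).toNat
        = Polynomial.X ^ (k + (tIdx (res P)).toNat)
      congr 1
      rw [heq, hcard']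
      omega
  -- Sum 2 : partitions whose last element is attached to an earlier block
  have hsum2 : ∑ P ∈ F.filter (fun P => ¬ LastAlone P), Polynomial.X ^ (tIdx P).toNat
      = ∑ p ∈ G'.sigma (fun A => MxF A),
          (Polynomial.X : Polynomial ℤ) ^ ((k - 1) + rk p.1 p.2 + (tIdx p.1).toNat) := by
    refine Finset.sum_bij'
      (fun P hP => (⟨res P, (exists_partner (Finset.mem_filter.1 hP).2).choose⟩ :
        Σ _ : Pt n, Fin n))
      (fun p _ => glue p.1 (some p.2)) ?_ ?_ ?_ ?_ ?_
    · intro P hP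
      obtain ⟨hPF, hLA⟩ := Finset.mem_filter.1 hP
      have hcard : (arcs P).card = k := (Finset.mem_filter.1 hPF).2
      obtain ⟨hmx, harc, hglue⟩ := (exists_partner (Finset.mem_filter.1 hP).2).choose_spec
      refine Finset.mem_sigma.2 ⟨Finset.mem_filter.2 ⟨Finset.mem_univ _, ?_⟩, mem_MxF.2 hmx⟩
      have hc1 : (arcs P).card = (arcs (res P)).card + 1 := by
        conv_lhs => rw [← hglue]
        exact card_arcs_glue_some hmx
      show (arcs (res P)).card = k - 1
      omega
    · rintro ⟨A, x⟩ hp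
      obtain ⟨hA, hx⟩ := Finset.mem_sigma.1 hp
      have hcard : (arcs A).card = k - 1 := (Finset.mem_filter.1 hA).2
      have hmx : IsMx A x := mem_MxF.1 hx
      refine Finset.mem_filter.2 ⟨Finset.mem_filter.2 ⟨Finset.mem_univ _, ?_⟩, ?_⟩
      · rw [card_arcs_glue_some hmx, hcard]
        omega
      · exact not_lastAlone_glue_some
    · intro P hP
      show glue (res P) (some ((exists_partner (Finset.mem_filter.1 hP).2).choose)) = P
      exact (exists_partner (Finset.mem_filter.1 hP).2).choose_spec.2.2
    · rintro ⟨A, x⟩ hp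
      obtain ⟨hA, hx⟩ := Finset.mem_sigma.1 hp
      have hmx : IsMx A x := mem_MxF.1 hx
      obtain ⟨h1, h2⟩ := partner_spec_eq (P := glue A (some x))
        not_lastAlone_glue_some hmx rfl
      exact Sigma.ext h1 (heq_of_eq h2)
    · intro P hP
      obtain ⟨hPF, hLA⟩ := Finset.mem_filter.1 hP
      have hcard : (arcs P).card = k := (Finset.mem_filter.1 hPF).2
      obtain ⟨hmx, harc, hglue⟩ := (exists_partner (Finset.mem_filter.1 hP).2).choose_spec
      set x := (exists_partner (Finset.mem_filter.1 hP).2).choose with hx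
      have heq : tIdx P = tIdx (res P) + (arcs (res P)).card + rk (res P) x := by
        conv_lhs => rw [← hglue]
        exact tIdx_glue_some hmx
      have hc1 : (arcs P).card = (arcs (res P)).card + 1 := by
        conv_lhs => rw [← hglue]
        exact card_arcs_glue_some hmx
      have hnn := tIdx_nonneg (res P)
      show (Polynomial.X : Polynomial ℤ) ^ (tIdx P).toNat
        = Polynomial.X ^ ((k - 1) + rk (res P) x + (tIdx (res P)).toNat)
      congr 1
      rw [heq]
      omega
  -- assemble
  have hexpand : Tpoly (n + 1) k
      = (∑ P ∈ F.filter (fun P => LastAlone P), Polynomial.X ^ (tIdx P).toNat)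
        + ∑ P ∈ F.filter (fun P => ¬ LastAlone P), Polynomial.X ^ (tIdx P).toNat := by
    rw [Tpoly]
    exact (Finset.sum_filter_add_sum_filter_not F _ _).symm
  have hrhs1 : Polynomial.X ^ k * Tpoly n k
      = ∑ A ∈ G, (Polynomial.X : Polynomial ℤ) ^ (k + (tIdx A).toNat) := by
    rw [Tpoly, Finset.mul_sum]
    exact Finset.sum_congr rfl (fun A _ => (pow_add _ _ _).symm)
  have hrhs2 : (∑ i ∈ Finset.range (n + 1 - k), (Polynomial.X : Polynomial ℤ) ^ i)
        * Polynomial.X ^ k * Tpoly n (k - 1)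
      = ∑ p ∈ G'.sigma (fun A => MxF A),
          (Polynomial.X : Polynomial ℤ) ^ ((k - 1) + rk p.1 p.2 + (tIdx p.1).toNat) := by
    rw [show (∑ p ∈ G'.sigma (fun A => MxF A),
          (Polynomial.X : Polynomial ℤ) ^ ((k - 1) + rk p.1 p.2 + (tIdx p.1).toNat))
        = ∑ A ∈ G', ∑ x ∈ MxF A,
            (Polynomial.X : Polynomial ℤ) ^ ((k - 1) + rk A x + (tIdx A).toNat)
      from Finset.sum_sigma G' (fun A => MxF A)
        (fun p => (Polynomial.X : Polynomial ℤ) ^ ((k - 1) + rk p.1 p.2 + (tIdx p.1).toNat))]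
    rw [Tpoly]
    rw [Finset.mul_sum]
    refine Finset.sum_congr rfl (fun A hA => ?_)
    have hcard : (arcs A).card = k - 1 := (Finset.mem_filter.1 hA).2
    have hmxcard : (MxF A).card = n + 1 - k := by
      have := card_arcs_add_card_mxF A
      omega
    have hrank := sum_rank_aux
      (fun j => (Polynomial.X : Polynomial ℤ) ^ ((k - 1) + j + (tIdx A).toNat))
      ((MxF A).card) (MxF A) rfl
    have hL : ∑ x ∈ MxF A,
        (Polynomial.X : Polynomial ℤ) ^ ((k - 1) + rk A x + (tIdx A).toNat)
        = ∑ i ∈ Finset.range (n + 1 - k),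
            (Polynomial.X : Polynomial ℤ) ^ ((k - 1) + (i + 1) + (tIdx A).toNat) := by
      rw [← hmxcard, ← hrank]
      exact Finset.sum_congr rfl (fun x _ => by rw [rk])
    rw [hL, Finset.sum_mul, Finset.sum_mul]
    refine Finset.sum_congr rfl (fun i _ => ?_)
    rw [← pow_add, ← pow_add]
    congr 1
    omega
  rw [hexpand, hsum1, hsum2, hrhs1, hrhs2]

end Stmt16

/-- for `n ≥ 1` and `1 ≤ k ≤ n+1`,
`T_{n+1,k}(q) = q^k T_{n,k}(q) + [n+1−k]_q · q^k · T_{n,k−1}(q)`,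
where `[j]_q = 1 + q + ⋯ + q^{j−1}`. -/
theorem stmt16 (n k : ℕ) (hn : 1 ≤ n) (hk1 : 1 ≤ k) (hk2 : k ≤ n + 1) :
    Tpoly (n + 1) k
      = Polynomial.X ^ k * Tpoly n k
        + (∑ i ∈ Finset.range (n + 1 - k), (Polynomial.X : Polynomial ℤ) ^ i)
            * Polynomial.X ^ k * Tpoly n (k - 1) := by
  exact Stmt16.stmt16' n k hk1 hk2
end

section
/- The poset of n-rooks under the Bruhat–Chevalley–Renner order is graded by the length function: if b covers a (that is, a < b and there is no rook c with a < c < b), then ℓ(b) = ℓ(a) + 1. -/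
open scoped Classical

-- helpers
lemma isRook_comp_swap {n : ℕ} {a : Fin n → ℕ} (ha : IsRook n a) (i j : Fin n) :
    IsRook n (fun m => a (Equiv.swap i j m)) := by
  refine ⟨fun m => ha.1 _, fun x y hx hxy => (Equiv.swap i j).injective (ha.2 _ _ hx hxy)⟩

lemma isRook_update {n : ℕ} {a : Fin n → ℕ} (ha : IsRook n a) (i : Fin n) (v : ℕ)
    (hv : v ≤ n) (hv0 : v ≠ 0) (hfree : ∀ m, m ≠ i → a m ≠ v) :
    IsRook n (Function.update a i v) := by
  constructor
  · intro m
    by_cases h : m = i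
    · subst h; simpa using hv
    · simpa [Function.update_of_ne h] using ha.1 m
  · intro x y hx hxy
    by_cases hxi : x = i <;> by_cases hyi : y = i
    · simp [hxi, hyi]
    · subst hxi
      rw [Function.update_self] at hxy
      rw [Function.update_of_ne hyi] at hxy
      exact absurd hxy.symm (hfree y hyi)
    · subst hyi
      rw [Function.update_self] at hxy
      rw [Function.update_of_ne hxi] at hxy hx
      exact absurd hxy (hfree x hxi)
    · rw [Function.update_of_ne hxi] at hxy hx
      rw [Function.update_of_ne hyi] at hxy
      exact ha.2 x y hx hxy

lemma step_ne {n : ℕ} {a b : Fin n → ℕ} (h : BCRStep n a b) : a ≠ b := by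
  rcases h with ⟨_, _, ⟨i, hlt, _⟩ | ⟨i, j, hij, h1, h2, h3, _⟩⟩
  · intro h; rw [h] at hlt; exact lt_irrefl _ hlt
  · intro h; rw [← h] at h1 h2 h3; rw [h1, h2] at h3
    rw [h1] at h3
    exact lt_irrefl _ (h3.trans (h3.trans h3))


lemma case1_count {n : ℕ} {a b : Fin n → ℕ} (ha : IsRook n a) (i : Fin n)
    (hlt : a i < b i) (heq : ∀ j, j ≠ i → a j = b j)
    (H1 : ∀ m, i < m → a m < a i ∨ b i ≤ a m)
    (H2 : ∀ v, a i < v → v < b i → ∃ m, m < i ∧ a m = v)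
    (hfree : ∀ m, m ≠ i → a m ≠ b i) :
    rookLen n b = rookLen n a + 1 := by
  classical
  set Sa := Finset.univ.filter (fun p : Fin n × Fin n => p.1 < p.2 ∧ a p.2 < a p.1) with hSa
  set Sb := Finset.univ.filter (fun p : Fin n × Fin n => p.1 < p.2 ∧ b p.2 < b p.1) with hSb
  set T := (Finset.univ.filter (fun m : Fin n => m < i ∧ a i < a m ∧ a m < b i)).image
      (fun m => ((m, i) : Fin n × Fin n)) with hT
  have memSa : ∀ x y : Fin n, ((x, y) : Fin n × Fin n) ∈ Sa ↔ (x < y ∧ a y < a x) := by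
    intro x y; simp [hSa]
  have memSb : ∀ x y : Fin n, ((x, y) : Fin n × Fin n) ∈ Sb ↔ (x < y ∧ b y < b x) := by
    intro x y; simp [hSb]
  have memT : ∀ x y : Fin n, ((x, y) : Fin n × Fin n) ∈ T ↔
      (x < i ∧ a i < a x ∧ a x < b i ∧ y = i) := by
    intro x y
    simp only [hT, Finset.mem_image, Finset.mem_filter, Finset.mem_univ, true_and,
      Prod.mk.injEq]
    constructor
    · rintro ⟨m, hm, h1, h2⟩; exact ⟨h1 ▸ hm.1, h1 ▸ hm.2.1, h1 ▸ hm.2.2, h2.symm⟩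
    · rintro ⟨h1, h2, h3, h4⟩; exact ⟨x, ⟨h1, h2, h3⟩, rfl, h4.symm⟩
  have hun : Sa = Sb ∪ T := by
    ext ⟨x, y⟩
    rw [Finset.mem_union, memSa, memSb, memT]
    by_cases hyi : y = i
    · rw [hyi]
      by_cases hxi : x = i
      · rw [hxi]
        constructor
        · rintro ⟨h, -⟩; exact absurd h (lt_irrefl _)
        · rintro (⟨h, -⟩ | ⟨h, -⟩) <;> exact absurd h (lt_irrefl _)
      · rw [← heq x hxi]
        have hfx := hfree x hxi
        constructor
        · rintro ⟨h1, h2⟩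
          rcases lt_or_ge (a x) (b i) with hc | hc
          · exact Or.inr ⟨h1, h2, hc, rfl⟩
          · exact Or.inl ⟨h1, by omega⟩
        · rintro (⟨h1, h2⟩ | ⟨h1, h2, h3, -⟩)
          · exact ⟨h1, by omega⟩
          · exact ⟨h1, h2⟩
    · by_cases hxi : x = i
      · rw [hxi, ← heq y hyi]
        constructor
        · rintro ⟨h1, h2⟩; exact Or.inl ⟨h1, by omega⟩
        · rintro (⟨h1, h2⟩ | ⟨h1, -⟩)
          · refine ⟨h1, ?_⟩
            rcases H1 y h1 with hc | hc
            · exact hc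
            · omega
          · exact absurd h1 (lt_irrefl i)
      · rw [← heq x hxi, ← heq y hyi]
        constructor
        · exact fun h => Or.inl h
        · rintro (h | ⟨-, -, -, h⟩)
          · exact h
          · exact absurd h hyi
  have hdisj : Disjoint Sb T := by
    rw [Finset.disjoint_left]
    rintro ⟨x, y⟩ hb' ht
    rw [memT] at ht
    obtain ⟨h1, h2, h3, h4⟩ := ht
    rw [memSb, h4] at hb'
    rw [← heq x (ne_of_lt h1)] at hb'
    omega
  have hTcard : T.card + a i + 1 = b i := by
    have hinj : Function.Injective (fun m : Fin n => ((m, i) : Fin n × Fin n)) := by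
      intro x y h; exact (Prod.mk.injEq _ _ _ _ ▸ h).1
    rw [hT, Finset.card_image_of_injective _ hinj]
    have : (Finset.univ.filter (fun m : Fin n => m < i ∧ a i < a m ∧ a m < b i)).card
        = (Finset.Ioo (a i) (b i)).card := by
      apply Finset.card_bij (i := fun m _ => a m)
      · intro m hm
        simp only [Finset.mem_filter, Finset.mem_univ, true_and] at hm
        exact Finset.mem_Ioo.2 ⟨hm.2.1, hm.2.2⟩
      · intro x hx y hy hxy
        simp only [Finset.mem_filter, Finset.mem_univ, true_and] at hx hy
        exact ha.2 x y (by omega) hxy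
      · intro v hv
        rw [Finset.mem_Ioo] at hv
        obtain ⟨m, hm1, hm2⟩ := H2 v hv.1 hv.2
        exact ⟨m, Finset.mem_filter.2 ⟨Finset.mem_univ _, hm1, by omega, by omega⟩, hm2⟩
    rw [this, Nat.card_Ioo]
    omega
  have hinv : rookInv n a = rookInv n b + T.card := by
    have := Finset.card_union_of_disjoint hdisj
    rw [rookInv, rookInv, ← hSa, ← hSb, hun]
    omega
  have hsum : (∑ m, b m) + a i = (∑ m, a m) + b i := by
    have h1 : ∑ m ∈ Finset.univ.erase i, b m + b i = ∑ m, b m :=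
      Finset.sum_erase_add _ _ (Finset.mem_univ i)
    have h2 : ∑ m ∈ Finset.univ.erase i, a m + a i = ∑ m, a m :=
      Finset.sum_erase_add _ _ (Finset.mem_univ i)
    have h3 : ∑ m ∈ Finset.univ.erase i, b m = ∑ m ∈ Finset.univ.erase i, a m := by
      apply Finset.sum_congr rfl
      intro m hm
      exact (heq m (Finset.ne_of_mem_erase hm)).symm
    omega
  rw [rookLen, rookLen]
  omega

lemma case2_count {n : ℕ} {a b : Fin n → ℕ} (ha : IsRook n a)
    (i j : Fin n) (hij : i < j)
    (hbi : b i = a j) (hbj : b j = a i) (hlt : a i < a j)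
    (heq : ∀ m, m ≠ i → m ≠ j → a m = b m)
    (hm : ∀ m, i < m → m < j → a m < a i ∨ a j < a m) :
    rookLen n b = rookLen n a + 1 := by
  classical
  have hne : i ≠ j := ne_of_lt hij
  have hji : j ≠ i := hne.symm
  have hnji : ¬ j < i := asymm hij
  set φ : Fin n × Fin n → Fin n × Fin n := fun p =>
    if p.1 < i ∧ p.2 = i then (p.1, j)
    else if p.1 < i ∧ p.2 = j then (p.1, i)
    else if j < p.2 ∧ p.1 = i then (j, p.2)
    else if j < p.2 ∧ p.1 = j then (i, p.2)
    else p with hφ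
  have e1 : ∀ x, x < i → φ (x, i) = (x, j) := by intro x hx; simp [hφ, hx]
  have e2 : ∀ x, x < i → φ (x, j) = (x, i) := by intro x hx; simp [hφ, hx, hji]
  have e3 : ∀ y, j < y → φ (i, y) = (j, y) := by
    intro y hy; simp [hφ, hy]
  have e4 : ∀ y, j < y → φ (j, y) = (i, y) := by
    intro y hy; simp [hφ, hy, hnji, hji]
  have e5 : ∀ p : Fin n × Fin n, ¬(p.1 < i ∧ (p.2 = i ∨ p.2 = j)) →
      ¬(j < p.2 ∧ (p.1 = i ∨ p.1 = j)) → φ p = p := by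
    rintro ⟨x, y⟩ hA hB
    simp only [hφ]
    split_ifs with c1 c2 c3 c4
    · exact absurd ⟨c1.1, Or.inl c1.2⟩ hA
    · exact absurd ⟨c2.1, Or.inr c2.2⟩ hA
    · exact absurd ⟨c3.1, Or.inl c3.2⟩ hB
    · exact absurd ⟨c4.1, Or.inr c4.2⟩ hB
    · rfl
  have hφφ : ∀ p, φ (φ p) = p := by
    rintro ⟨x, y⟩
    by_cases h1 : x < i ∧ (y = i ∨ y = j)
    · obtain ⟨hx, hy | hy⟩ := h1
      · subst hy; rw [e1 x hx, e2 x hx]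
      · subst hy; rw [e2 x hx, e1 x hx]
    · by_cases h2 : j < y ∧ (x = i ∨ x = j)
      · obtain ⟨hy, hx | hx⟩ := h2
        · subst hx; rw [e3 y hy, e4 y hy]
        · subst hx; rw [e4 y hy, e3 y hy]
      · rw [e5 (x,y) h1 h2, e5 (x,y) h1 h2]
  -- key equivalence
  have Keq : ∀ p : Fin n × Fin n, p ≠ (i, j) →
      ((p.1 < p.2 ∧ a p.2 < a p.1) ↔ ((φ p).1 < (φ p).2 ∧ b (φ p).2 < b (φ p).1)) := by
    rintro ⟨x, y⟩ hp
    by_cases h1 : x < i ∧ (y = i ∨ y = j)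
    · obtain ⟨hx, hy | hy⟩ := h1
      · rw [hy, e1 x hx]
        show (x < i ∧ a i < a x) ↔ (x < j ∧ b j < b x)
        have hxi : x ≠ i := ne_of_lt hx
        have hxj : x ≠ j := ne_of_lt (hx.trans hij)
        rw [hbj, ← heq x hxi hxj]
        exact ⟨fun ⟨_, h⟩ => ⟨hx.trans hij, h⟩, fun ⟨_, h⟩ => ⟨hx, h⟩⟩
      · rw [hy, e2 x hx]
        show (x < j ∧ a j < a x) ↔ (x < i ∧ b i < b x)
        have hxi : x ≠ i := ne_of_lt hx
        have hxj : x ≠ j := ne_of_lt (hx.trans hij)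
        rw [hbi, ← heq x hxi hxj]
        exact ⟨fun ⟨_, h⟩ => ⟨hx, h⟩, fun ⟨_, h⟩ => ⟨hx.trans hij, h⟩⟩
    · by_cases h2 : j < y ∧ (x = i ∨ x = j)
      · obtain ⟨hy, hx | hx⟩ := h2
        · rw [hx, e3 y hy]
          show (i < y ∧ a y < a i) ↔ (j < y ∧ b y < b j)
          have hyi : y ≠ i := (ne_of_lt (hij.trans hy)).symm
          have hyj : y ≠ j := (ne_of_lt hy).symm
          rw [hbj, ← heq y hyi hyj]
          exact ⟨fun ⟨_, h⟩ => ⟨hy, h⟩, fun ⟨_, h⟩ => ⟨hij.trans hy, h⟩⟩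
        · rw [hx, e4 y hy]
          show (j < y ∧ a y < a j) ↔ (i < y ∧ b y < b i)
          have hyi : y ≠ i := (ne_of_lt (hij.trans hy)).symm
          have hyj : y ≠ j := (ne_of_lt hy).symm
          rw [hbi, ← heq y hyi hyj]
          exact ⟨fun ⟨_, h⟩ => ⟨hij.trans hy, h⟩, fun ⟨_, h⟩ => ⟨hy, h⟩⟩
      · rw [e5 (x, y) h1 h2]
        show (x < y ∧ a y < a x) ↔ (x < y ∧ b y < b x)
        by_cases hyi : y = i
        · have hxi : ¬ x < i := fun h => h1 ⟨h, Or.inl hyi⟩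
          rw [hyi]
          exact ⟨fun ⟨h, _⟩ => absurd h hxi, fun ⟨h, _⟩ => absurd h hxi⟩
        · by_cases hyj : y = j
          · have hxi : ¬ x < i := fun h => h1 ⟨h, Or.inr hyj⟩
            by_cases hxj : x = j
            · rw [hyj, hxj]
              exact ⟨fun ⟨h, _⟩ => absurd h (lt_irrefl _), fun ⟨h, _⟩ => absurd h (lt_irrefl _)⟩
            · have hxi' : x ≠ i := by
                intro h; exact hp (by rw [h, hyj])
              have hix : i < x := lt_of_le_of_ne (le_of_not_gt hxi) (Ne.symm hxi')
              rw [hyj, hbj, ← heq x hxi' hxj]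
              by_cases hxj' : x < j
              · rcases hm x hix hxj' with hd | hd
                · constructor
                  · rintro ⟨-, h⟩; exact absurd (hd.trans hlt) (asymm h)
                  · rintro ⟨-, h⟩; exact absurd hd (asymm h)
                · exact ⟨fun _ => ⟨hxj', hlt.trans hd⟩, fun _ => ⟨hxj', hd⟩⟩
              · exact ⟨fun ⟨h, _⟩ => absurd h hxj', fun ⟨h, _⟩ => absurd h hxj'⟩
          · by_cases hxi : x = i
            · have hjy : ¬ j < y := fun h => h2 ⟨h, Or.inl hxi⟩
              have hyj' : y < j := lt_of_le_of_ne (le_of_not_gt hjy) hyj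
              rw [hxi, hbi, ← heq y hyi hyj]
              by_cases hiy : i < y
              · rcases hm y hiy hyj' with hd | hd
                · exact ⟨fun _ => ⟨hiy, hd.trans hlt⟩, fun _ => ⟨hiy, hd⟩⟩
                · constructor
                  · rintro ⟨-, h⟩; exact absurd (hd.trans h) (asymm hlt)
                  · rintro ⟨-, h⟩; exact absurd (hd.trans h) (lt_irrefl _)
              · exact ⟨fun ⟨h, _⟩ => absurd h hiy, fun ⟨h, _⟩ => absurd h hiy⟩
            · by_cases hxj : x = j
              · have hjy : ¬ j < y := fun h => h2 ⟨h, Or.inr hxj⟩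
                rw [hxj]
                exact ⟨fun ⟨h, _⟩ => absurd h hjy, fun ⟨h, _⟩ => absurd h hjy⟩
              · rw [← heq x hxi hxj, ← heq y hyi hyj]
  -- the two inversion sets
  set Sa := Finset.univ.filter (fun p : Fin n × Fin n => p.1 < p.2 ∧ a p.2 < a p.1) with hSa
  set Sb := Finset.univ.filter (fun p : Fin n × Fin n => p.1 < p.2 ∧ b p.2 < b p.1) with hSb
  have memSa : ∀ p : Fin n × Fin n, p ∈ Sa ↔ (p.1 < p.2 ∧ a p.2 < a p.1) := by
    intro p; simp [hSa]
  have memSb : ∀ p : Fin n × Fin n, p ∈ Sb ↔ (p.1 < p.2 ∧ b p.2 < b p.1) := by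
    intro p; simp [hSb]
  have hijSb : (i, j) ∈ Sb := (memSb (i, j)).2 ⟨hij, by rw [hbi, hbj]; exact hlt⟩
  have hijSa : (i, j) ∉ Sa := by
    rw [memSa]; rintro ⟨-, h⟩; exact absurd hlt (asymm h)
  have hφij : φ (i, j) = (i, j) := by
    apply e5
    · rintro ⟨h, -⟩; exact lt_irrefl i h
    · rintro ⟨h, -⟩; exact lt_irrefl j h
  have hcards : Sa.card = (Sb.erase (i, j)).card := by
    apply Finset.card_bij' (i := fun p _ => φ p) (j := fun p _ => φ p)
    · intro p hpa
      have hpne : p ≠ (i, j) := fun h => hijSa (h ▸ hpa)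
      have h1 : φ p ∈ Sb := (memSb (φ p)).2 ((Keq p hpne).1 ((memSa p).1 hpa))
      refine Finset.mem_erase.2 ⟨fun h => ?_, h1⟩
      exact hpne (by rw [← hφφ p, h, hφij])
    · intro q hq
      obtain ⟨hqne, hqb⟩ := Finset.mem_erase.1 hq
      have hφqne : φ q ≠ (i, j) := fun h => hqne (by rw [← hφφ q, h, hφij])
      refine (memSa (φ q)).2 ((Keq (φ q) hφqne).2 ?_)
      rw [hφφ q]
      exact (memSb q).1 hqb
    · intro p _; exact hφφ p
    · intro p _; exact hφφ p
  have hinv : rookInv n b = rookInv n a + 1 := by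
    have : (Sb.erase (i, j)).card + 1 = Sb.card := Finset.card_erase_add_one hijSb
    rw [rookInv, rookInv, ← hSa, ← hSb]
    omega
  have hsum : (∑ m, b m) = ∑ m, a m := by
    have hba : b = fun m => a (Equiv.swap i j m) := by
      funext m
      by_cases hmi : m = i
      · subst hmi; rw [Equiv.swap_apply_left]; exact hbi
      · by_cases hmj : m = j
        · subst hmj; rw [Equiv.swap_apply_right]; exact hbj
        · rw [Equiv.swap_apply_of_ne_of_ne hmi hmj]; exact (heq m hmi hmj).symm
    rw [hba]
    exact Equiv.sum_comp (Equiv.swap i j) a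
  rw [rookLen, rookLen, hinv, hsum]
  omega

/-- the poset of `n`-rooks under the Bruhat–Chevalley–Renner
order is graded by the length function `ℓ`: if `b` covers `a` (i.e. `a ≤ b`,
`a ≠ b`, and no rook lies strictly between them), then `ℓ(b) = ℓ(a) + 1`. -/
theorem stmt17 (n : ℕ) (a b : Fin n → ℕ) (ha : IsRook n a) (hb : IsRook n b)
    (hab : BCRle n a b) (hne : a ≠ b)
    (hcov : ∀ c : Fin n → ℕ, IsRook n c → BCRle n a c → BCRle n c b →
      c = a ∨ c = b) :
    rookLen n b = rookLen n a + 1 := by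
  classical
  have hstep : BCRStep n a b := by
    rcases Relation.ReflTransGen.cases_head hab with h | ⟨c, hac, hcb⟩
    · exact absurd h hne
    · rcases hcov c hac.2.1 (Relation.ReflTransGen.single hac) hcb with h | h
      · exact absurd h.symm (step_ne hac)
      · rw [← h]; exact hac
  rcases hstep with ⟨-, -, ⟨i, hlt, heq⟩ | ⟨i, j, hij, hbi, hbj, hblt, heq⟩⟩
  · -- case 1: single entry raised at position i
    have hbi0 : b i ≠ 0 := by omega
    have hfree : ∀ m, m ≠ i → a m ≠ b i := by
      intro m hmi hcontra
      have hbm : b m = b i := by rw [← heq m hmi]; exact hcontra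
      exact hmi (hb.2 m i (by rw [hbm]; exact hbi0) hbm)
    have H1 : ∀ m, i < m → a m < a i ∨ b i ≤ a m := by
      intro m him
      by_contra hcon
      push_neg at hcon
      obtain ⟨h1, h2⟩ := hcon
      have hmi : m ≠ i := (ne_of_lt him).symm
      rcases Nat.lt_or_ge (a i) (a m) with hcase | hcase
      · -- a i < a m < b i : use c = a∘swap(i,m), then raise
        set c : Fin n → ℕ := fun x => a (Equiv.swap i m x) with hc
        have hcrook : IsRook n c := isRook_comp_swap ha i m
        have hci : c i = a m := by rw [hc]; simp
        have hcm : c m = a i := by rw [hc]; simp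
        have hcx : ∀ x, x ≠ i → x ≠ m → c x = a x := by
          intro x hx1 hx2; rw [hc]; simp [Equiv.swap_apply_of_ne_of_ne hx1 hx2]
        have hstep1 : BCRStep n a c :=
          ⟨ha, hcrook, Or.inr ⟨i, m, him, by rw [hci], by rw [hcm],
            by rw [hci, hcm]; exact hcase, fun x hx1 hx2 => (hcx x hx1 hx2).symm⟩⟩
        have hcfree : ∀ x, x ≠ i → c x ≠ b i := by
          intro x hxi
          by_cases hxm : x = m
          · rw [hxm, hcm]; omega
          · rw [hcx x hxi hxm]; exact hfree x hxi
        set c2 := Function.update c i (b i) with hc2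
        have hc2rook : IsRook n c2 := isRook_update hcrook i (b i) (hb.1 i) hbi0 hcfree
        have hstep2 : BCRStep n c c2 :=
          ⟨hcrook, hc2rook, Or.inl ⟨i, by rw [hc2, Function.update_self, hci]; exact h2,
            fun x hx => (Function.update_of_ne hx _ _).symm⟩⟩
        have hstep3 : BCRStep n c2 b := by
          refine ⟨hc2rook, hb, Or.inl ⟨m, ?_, ?_⟩⟩
          · rw [hc2, Function.update_of_ne hmi, hcm, ← heq m hmi]; exact hcase
          · intro x hxm
            by_cases hxi : x = i
            · rw [hxi, hc2, Function.update_self]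
            · rw [hc2, Function.update_of_ne hxi, hcx x hxi hxm]; exact heq x hxi
        have hca : c ≠ a := by
          intro h
          have := congrFun h i
          rw [hci] at this; omega
        have hcb' : c ≠ b := by
          intro h
          have := congrFun h i
          rw [hci] at this; omega
        rcases hcov c hcrook (Relation.ReflTransGen.single hstep1)
          ((Relation.ReflTransGen.single hstep2).tail hstep3) with h | h
        · exact hca h
        · exact hcb' h
      · -- a m = a i, forced a i = 0
        have heq0 : a m = a i := le_antisymm (by omega) h1
        have hai0 : a i = 0 := by
          by_contra h0
          exact hmi (ha.2 m i (by omega) (by omega))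
        set c := Function.update a m (b i) with hc
        have hafree : ∀ x, x ≠ m → a x ≠ b i := by
          intro x hxm
          by_cases hxi : x = i
          · rw [hxi]; omega
          · exact hfree x hxi
        have hcrook : IsRook n c := isRook_update ha m (b i) (hb.1 i) hbi0 hafree
        have hstep1 : BCRStep n a c :=
          ⟨ha, hcrook, Or.inl ⟨m, by rw [hc, Function.update_self]; omega,
            fun x hx => (Function.update_of_ne hx _ _).symm⟩⟩
        have hstep2 : BCRStep n c b := by
          refine ⟨hcrook, hb, Or.inr ⟨i, m, him, ?_, ?_, ?_, ?_⟩⟩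
          · rw [hc, Function.update_self]
          · rw [hc, Function.update_of_ne (Ne.symm hmi), ← heq m hmi]; omega
          · rw [← heq m hmi]; omega
          · intro x hxi hxm
            rw [hc, Function.update_of_ne hxm]; exact heq x hxi
        have hca : c ≠ a := by
          intro h
          have := congrFun h m
          rw [hc, Function.update_self] at this; omega
        have hcb' : c ≠ b := by
          intro h
          have := congrFun h i
          rw [hc, Function.update_of_ne (Ne.symm hmi)] at this; omega
        rcases hcov c hcrook (Relation.ReflTransGen.single hstep1)
          (Relation.ReflTransGen.single hstep2) with h | h
        · exact hca h
        · exact hcb' h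
    have H2 : ∀ v, a i < v → v < b i → ∃ m, m < i ∧ a m = v := by
      intro v hv1 hv2
      by_contra hcon
      push_neg at hcon
      have hfreev : ∀ m, m ≠ i → a m ≠ v := by
        intro m hmi hval
        rcases lt_trichotomy m i with h | h | h
        · exact hcon m h hval
        · exact hmi h
        · rcases H1 m h with hc | hc <;> omega
      set c := Function.update a i v with hc
      have hcrook : IsRook n c :=
        isRook_update ha i v (by have := hb.1 i; omega) (by omega) hfreev
      have hstep1 : BCRStep n a c :=
        ⟨ha, hcrook, Or.inl ⟨i, by rw [hc, Function.update_self]; exact hv1,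
          fun x hx => (Function.update_of_ne hx _ _).symm⟩⟩
      have hstep2 : BCRStep n c b := by
        refine ⟨hcrook, hb, Or.inl ⟨i, by rw [hc, Function.update_self]; exact hv2, ?_⟩⟩
        intro x hx
        rw [hc, Function.update_of_ne hx]; exact heq x hx
      have hca : c ≠ a := by
        intro h
        have := congrFun h i
        rw [hc, Function.update_self] at this; omega
      have hcb' : c ≠ b := by
        intro h
        have := congrFun h i
        rw [hc, Function.update_self] at this; omega
      rcases hcov c hcrook (Relation.ReflTransGen.single hstep1)
        (Relation.ReflTransGen.single hstep2) with h | h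
      · exact hca h
      · exact hcb' h
    exact case1_count ha i hlt heq H1 H2 hfree
  · -- case 2: transposition step at (i, j)
    have hlt' : a i < a j := by rw [← hbi, ← hbj]; exact hblt
    have hm : ∀ m, i < m → m < j → a m < a i ∨ a j < a m := by
      intro m him hmj
      by_contra hcon
      push_neg at hcon
      obtain ⟨h1, h2⟩ := hcon
      have hmi : m ≠ i := (ne_of_lt him).symm
      have hmj' : m ≠ j := ne_of_lt hmj
      have hmaj : a m ≠ a j := fun h => hmj' (ha.2 m j (by omega) h)
      rcases Nat.lt_or_ge (a i) (a m) with hcase | hcase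
      · -- a i < a m < a j
        set c : Fin n → ℕ := fun x => a (Equiv.swap i m x) with hc
        have hcrook : IsRook n c := isRook_comp_swap ha i m
        have hci : c i = a m := by rw [hc]; simp
        have hcm : c m = a i := by rw [hc]; simp
        have hcx : ∀ x, x ≠ i → x ≠ m → c x = a x := by
          intro x hx1 hx2; rw [hc]; simp [Equiv.swap_apply_of_ne_of_ne hx1 hx2]
        have hji : j ≠ i := (ne_of_lt hij).symm
        have hcj : c j = a j := hcx j hji (Ne.symm hmj')
        have hstep1 : BCRStep n a c :=
          ⟨ha, hcrook, Or.inr ⟨i, m, him, by rw [hci], by rw [hcm],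
            by rw [hci, hcm]; exact hcase, fun x hx1 hx2 => (hcx x hx1 hx2).symm⟩⟩
        set d : Fin n → ℕ := fun x => c (Equiv.swap m j x) with hd
        have hdrook : IsRook n d := isRook_comp_swap hcrook m j
        have hdm : d m = a j := by rw [hd]; simp [hcj]
        have hdj : d j = a i := by rw [hd]; simp [hcm]
        have hdx : ∀ x, x ≠ m → x ≠ j → d x = c x := by
          intro x hx1 hx2; rw [hd]; simp [Equiv.swap_apply_of_ne_of_ne hx1 hx2]
        have hdi : d i = a m := by rw [hdx i (Ne.symm hmi) (Ne.symm hji), hci]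
        have hstep2 : BCRStep n c d :=
          ⟨hcrook, hdrook, Or.inr ⟨m, j, hmj, by rw [hdm, hcj], by rw [hdj, hcm],
            by rw [hdm, hdj]; exact hlt', fun x hx1 hx2 => (hdx x hx1 hx2).symm⟩⟩
        have hstep3 : BCRStep n d b := by
          refine ⟨hdrook, hb, Or.inr ⟨i, m, him, ?_, ?_, ?_, ?_⟩⟩
          · rw [hbi, hdm]
          · rw [← heq m hmi hmj', hdi]
          · rw [hbi, ← heq m hmi hmj']; omega
          · intro x hx1 hx2
            by_cases hxj : x = j
            · rw [hxj, hdj, hbj]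
            · rw [hdx x hx2 hxj, hcx x hx1 hx2]; exact heq x hx1 hxj
        have hca : c ≠ a := by
          intro h
          have := congrFun h i
          rw [hci] at this; omega
        have hcb' : c ≠ b := by
          intro h
          have := congrFun h i
          rw [hci, hbi] at this; omega
        rcases hcov c hcrook (Relation.ReflTransGen.single hstep1)
          ((Relation.ReflTransGen.single hstep2).tail hstep3) with h | h
        · exact hca h
        · exact hcb' h
      · -- a m = a i, both zero
        have heq0 : a m = a i := le_antisymm hcase h1
        have hai0 : a i = 0 := by
          by_contra h0
          exact hmi (ha.2 m i (by omega) (by omega))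
        set c : Fin n → ℕ := fun x => a (Equiv.swap m j x) with hc
        have hcrook : IsRook n c := isRook_comp_swap ha m j
        have hcm : c m = a j := by rw [hc]; simp
        have hcj : c j = a m := by rw [hc]; simp
        have hcx : ∀ x, x ≠ m → x ≠ j → c x = a x := by
          intro x hx1 hx2; rw [hc]; simp [Equiv.swap_apply_of_ne_of_ne hx1 hx2]
        have hji : j ≠ i := (ne_of_lt hij).symm
        have hci : c i = a i := hcx i (Ne.symm hmi) (Ne.symm hji)
        have hstep1 : BCRStep n a c :=
          ⟨ha, hcrook, Or.inr ⟨m, j, hmj, by rw [hcm], by rw [hcj],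
            by rw [hcm, hcj]; omega, fun x hx1 hx2 => (hcx x hx1 hx2).symm⟩⟩
        have hstep2 : BCRStep n c b := by
          refine ⟨hcrook, hb, Or.inr ⟨i, m, him, ?_, ?_, ?_, ?_⟩⟩
          · rw [hbi, hcm]
          · rw [← heq m hmi hmj', hci]; omega
          · rw [hbi, ← heq m hmi hmj']; omega
          · intro x hx1 hx2
            by_cases hxj : x = j
            · rw [hxj, hcj, hbj]; omega
            · rw [hcx x hx2 hxj]; exact heq x hx1 hxj
        have hca : c ≠ a := by
          intro h
          have := congrFun h m
          rw [hcm] at this; omega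
        have hcb' : c ≠ b := by
          intro h
          have := congrFun h i
          rw [hci, hbi] at this; omega
        rcases hcov c hcrook (Relation.ReflTransGen.single hstep1)
          (Relation.ReflTransGen.single hstep2) with h | h
        · exact hca h
        · exact hcb' h
    exact case2_count ha i j hij hbi hbj hlt' heq hm
end

section
/- Let x and y be n-rooks and let i < j be indices such that y(i) = x(j), y(j) = x(i), y(j) < y(i), and x(m) = y(m) for all m ∉ {i,j}. Then ℓ(y) = ℓ(x) + 1 if and only if for every s with i < s < j, either x(s) > x(j) or x(s) < x(i). -/
open scoped Classical

/-- let `x`, `y` be `n`-rooks and `i < j` indices with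
`y(i) = x(j)`, `y(j) = x(i)`, `y(j) < y(i)`, and `x(m) = y(m)` for `m ∉ {i,j}`.
Then `ℓ(y) = ℓ(x) + 1` iff for every `s` with `i < s < j`, either
`x(s) > x(j)` or `x(s) < x(i)`. -/
theorem stmt19 (n : ℕ) (x y : Fin n → ℕ) (hx : IsRook n x) (hy : IsRook n y)
    (i j : Fin n) (hij : i < j)
    (h1 : y i = x j) (h2 : y j = x i) (h3 : y j < y i)
    (heq : ∀ m : Fin n, m ≠ i → m ≠ j → x m = y m) :
    rookLen n y = rookLen n x + 1 ↔
      ∀ s : Fin n, i < s → s < j → (x j < x s ∨ x s < x i) := by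
  classical
  have hij' : i ≠ j := ne_of_lt hij
  have hab : x i < x j := by rw [← h1, ← h2]; exact h3
  set D := (Finset.univ : Finset (Fin n)) \ {i, j} with hD
  have hmemD : ∀ s, s ∈ D ↔ s ≠ i ∧ s ≠ j := by
    intro s
    simp [hD, Finset.mem_sdiff, not_or]
  -- splitting sums over i, j, rest
  have hsub : ({i, j} : Finset (Fin n)) ⊆ Finset.univ := Finset.subset_univ _
  have hsplitN : ∀ f : Fin n → ℕ, ∑ m, f m = f i + f j + ∑ m ∈ D, f m := by
    intro f
    rw [hD, ← Finset.sum_sdiff hsub, Finset.sum_pair hij']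
    omega
  have hsplitZ : ∀ f : Fin n → ℤ, ∑ m, f m = f i + f j + ∑ m ∈ D, f m := by
    intro f
    rw [hD, ← Finset.sum_sdiff hsub, Finset.sum_pair hij']
    ring
  have hsum : ∑ m, y m = ∑ m, x m := by
    have hDeq : ∑ m ∈ D, y m = ∑ m ∈ D, x m :=
      Finset.sum_congr rfl (fun s hs =>
        (heq s ((hmemD s).1 hs).1 ((hmemD s).1 hs).2).symm)
    rw [hsplitN y, hsplitN x, h1, h2, hDeq]
    omega
  -- the integer difference function
  set F : Fin n × Fin n → ℤ := fun p =>
    (if p.1 < p.2 ∧ y p.2 < y p.1 then (1 : ℤ) else 0)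
    - (if p.1 < p.2 ∧ x p.2 < x p.1 then (1 : ℤ) else 0) with hF
  have hcast : ∀ f : Fin n → ℕ, (rookInv n f : ℤ) =
      ∑ p : Fin n × Fin n, (if p.1 < p.2 ∧ f p.2 < f p.1 then (1 : ℤ) else 0) := by
    intro f
    rw [rookInv, Finset.card_filter]
    push_cast
    rfl
  have hFdiff : (rookInv n y : ℤ) - rookInv n x = ∑ p : Fin n × Fin n, F p := by
    rw [hcast y, hcast x, ← Finset.sum_sub_distrib]
  set H : Fin n → ℤ := fun s => F (s, i) + F (s, j) + F (i, s) + F (j, s) with hH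
  -- rows not in {i,j}
  have hrow : ∀ s ∈ D, ∑ t, F (s, t) = F (s, i) + F (s, j) := by
    intro s hs
    have hys : y s = x s := (heq s ((hmemD s).1 hs).1 ((hmemD s).1 hs).2).symm
    have : ∑ t ∈ ({i, j} : Finset (Fin n)), F (s, t) = ∑ t, F (s, t) := by
      apply Finset.sum_subset hsub
      intro t _ ht
      simp only [Finset.mem_insert, Finset.mem_singleton, not_or] at ht
      have hyt : y t = x t := (heq t ht.1 ht.2).symm
      simp only [hF, hys, hyt, sub_self]
    rw [← this, Finset.sum_pair hij']
  have hFii : F (i, i) = 0 := by simp [hF]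
  have hFjj : F (j, j) = 0 := by simp [hF]
  have hFji : F (j, i) = 0 := by
    simp [hF, not_lt_of_gt hij, asymm hij]
  have hFij : F (i, j) = 1 := by
    simp only [hF]
    rw [if_pos ⟨hij, h3⟩, if_neg (by push_neg; intro _; omega)]
    ring
  -- total decomposition
  have htotal : ∑ p : Fin n × Fin n, F p = 1 + ∑ s ∈ D, H s := by
    rw [Fintype.sum_prod_type]
    rw [hsplitZ (fun s => ∑ t, F (s, t))]
    rw [hsplitZ (fun t => F (i, t)), hsplitZ (fun t => F (j, t))]
    rw [hFii, hFjj, hFij, hFji]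
    rw [Finset.sum_congr rfl hrow]
    have : ∑ s ∈ D, H s = (∑ s ∈ D, (F (s, i) + F (s, j)))
        + ((∑ t ∈ D, F (i, t)) + ∑ t ∈ D, F (j, t)) := by
      rw [← Finset.sum_add_distrib, ← Finset.sum_add_distrib]
      apply Finset.sum_congr rfl
      intro s _
      simp only [hH]
      ring
    rw [this]
    ring
  -- the per-index key lemma
  have hkey : ∀ s ∈ D, 0 ≤ H s ∧
      (H s = 0 ↔ (i < s → s < j → (x j < x s ∨ x s < x i))) := by
    intro s hs
    obtain ⟨hsi, hsj⟩ := (hmemD s).1 hs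
    have hys : y s = x s := (heq s hsi hsj).symm
    simp only [hH, hF, hys, h1, h2]
    rcases lt_trichotomy s i with hlt | heqc | hgt
    · have hsj' : s < j := hlt.trans hij
      have hni : ¬ i < s := not_lt.2 hlt.le
      have hnj : ¬ j < s := not_lt.2 (hsj'.le)
      simp only [hlt, hsj', hni, hnj, true_and, false_and, if_true, if_false,
        false_implies, true_implies, iff_true]
      exact ⟨by split_ifs <;> omega, by split_ifs <;> omega⟩
    · exact absurd heqc hsi
    · rcases lt_trichotomy s j with hlt2 | heqc2 | hgt2
      · have hns : ¬ s < i := not_lt.2 hgt.le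
        have hnj : ¬ j < s := not_lt.2 hlt2.le
        simp only [hgt, hlt2, hns, hnj, true_and, false_and, if_true, if_false,
          false_implies, true_implies, iff_true]
        exact ⟨by split_ifs <;> omega, by split_ifs <;> omega⟩
      · exact absurd heqc2 hsj
      · have hns : ¬ s < i := not_lt.2 hgt.le
        have hnsj : ¬ s < j := not_lt.2 hgt2.le
        have hjs : j < s := hgt2
        simp only [hgt, hjs, hns, hnsj, true_and, false_and, if_true, if_false,
          false_implies, true_implies, iff_true]
        exact ⟨by split_ifs <;> omega, by split_ifs <;> omega⟩
  have hiff : (∑ s ∈ D, H s = 0) ↔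
      ∀ s : Fin n, i < s → s < j → (x j < x s ∨ x s < x i) := by
    rw [Finset.sum_eq_zero_iff_of_nonneg (fun s hs => (hkey s hs).1)]
    constructor
    · intro h s hs1 hs2
      have hsD : s ∈ D := (hmemD s).2 ⟨ne_of_gt hs1, ne_of_lt hs2⟩
      exact ((hkey s hsD).2.1 (h s hsD)) hs1 hs2
    · intro h s hs
      exact (hkey s hs).2.2 (fun hs1 hs2 => h s hs1 hs2)
  have hinv : (rookInv n y : ℤ) = rookInv n x + 1 + ∑ s ∈ D, H s := by
    have := hFdiff
    rw [htotal] at this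
    linarith
  rw [← hiff]
  unfold rookLen
  constructor
  · intro h
    have hnat : rookInv n y = rookInv n x + 1 := by omega
    have : (rookInv n y : ℤ) = (rookInv n x : ℤ) + 1 := by exact_mod_cast hnat
    linarith [hinv]
  · intro h
    have : (rookInv n y : ℤ) = (rookInv n x : ℤ) + 1 := by rw [hinv, h]; ring
    have hnat : rookInv n y = rookInv n x + 1 := by exact_mod_cast this
    omega
end
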